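/- arXiv:1511.00209 — 4 statements merged into one kernel-verified Lean document; each statement's English description precedes it below -/
import Mathlib

section
/- Let A be a finite alphabet and let x ∈ A^ℤ be an eventually periodic sequence. If (i,m) and (j,n) are two anomaly occurrences of x, then the periodic sequences obtained by removing the corresponding blocks coincide: p(x;i,m) = p(x;j,n). -/
open Classical

/-- The shift map `σ` on bi-infinite sequences: `σ(x)_i = x_{i+1}`. -/
def shiftMap {A : Type*} (x : ℤ → A) : ℤ → A := fun i => x (i + 1)

/-- The iterated shift `σ^k` for `k ∈ ℤ`: `σ^k(x)_i = x_{i+k}`. -/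
def shiftZ {A : Type*} (k : ℤ) (x : ℤ → A) : ℤ → A := fun i => x (i + k)

/-- `x` is periodic with period `N > 0`, i.e. `σ^N(x) = x`. -/
def IsPeriodicWith {A : Type*} (x : ℤ → A) (N : ℕ) : Prop :=
  0 < N ∧ ∀ i : ℤ, x (i + N) = x i

/-- `x` is periodic (with some period `N > 0`). -/
def IsPeriodicSeq {A : Type*} (x : ℤ → A) : Prop := ∃ N : ℕ, IsPeriodicWith x N

/-- The sequence `p(x;i,n)` obtained from `x` by removing the block `x_{i+1} ⋯ x_{i+n}`. -/
def removeBlock {A : Type*} (x : ℤ → A) (i : ℤ) (n : ℕ) : ℤ → A :=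
  fun k => if k ≤ i then x k else x (k + n)

/-- `(i,n)` is an anomaly occurrence of `x`: `n > 0` and `p(x;i,n)` is periodic. -/
def IsAnomalyOcc {A : Type*} (x : ℤ → A) (i : ℤ) (n : ℕ) : Prop :=
  0 < n ∧ IsPeriodicSeq (removeBlock x i n)

/-- `x` is eventually periodic: non-periodic, but removing some block leaves a periodic sequence. -/
def EventuallyPeriodic {A : Type*} (x : ℤ → A) : Prop :=
  ¬ IsPeriodicSeq x ∧ ∃ (i : ℤ) (n : ℕ), IsAnomalyOcc x i n

/-- The least period of an eventually periodic sequence `x`: the least period of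
`p(x;i,n)` over anomaly occurrences `(i,n)` of `x`. -/
noncomputable def evLeastPeriod {A : Type*} (x : ℤ → A) : ℕ :=
  sInf {N : ℕ | ∃ (i : ℤ) (n : ℕ), IsAnomalyOcc x i n ∧ IsPeriodicWith (removeBlock x i n) N}

/-- The anomaly size `a(x)`: the minimum of `n` over anomaly occurrences `(i,n)` of `x`. -/
noncomputable def anomalySize {A : Type*} (x : ℤ → A) : ℕ :=
  sInf {n : ℕ | ∃ i : ℤ, IsAnomalyOcc x i n}

/-- The orbit `{σ^k(x) : k ∈ ℤ}` of a bi-infinite sequence. -/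
def seqOrbit {A : Type*} (x : ℤ → A) : Set (ℤ → A) := {y | ∃ k : ℤ, y = shiftZ k x}

/-- The subshift generated by `x`: the closure of its orbit in the product topology. -/
def subshiftGen {A : Type*} [TopologicalSpace A] (x : ℤ → A) : Set (ℤ → A) :=
  closure (seqOrbit x)

/-- Two subshifts are conjugate if there is a homeomorphism between them commuting
with the shift. -/
def Conjugate {A B : Type*} [TopologicalSpace A] [TopologicalSpace B]
    (X : Set (ℤ → A)) (Y : Set (ℤ → B)) : Prop :=
  ∃ φ : X ≃ₜ Y, ∀ (u : ℤ → A) (hu : u ∈ X) (hu' : shiftMap u ∈ X),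
    ((φ ⟨shiftMap u, hu'⟩ : Y) : ℤ → B) = shiftMap ((φ ⟨u, hu⟩ : Y) : ℤ → B)

/-- The relation generating the suspension: `(x,s) ∼ (σ^n(x), s - n)`. -/
def SuspRel {A : Type*} (X : Set (ℤ → A)) : (X × ℝ) → (X × ℝ) → Prop :=
  fun p q => ∃ n : ℤ, (q.1 : ℤ → A) = shiftZ n (p.1 : ℤ → A) ∧ q.2 = p.2 - n

/-- The suspension `ΣX` of a subshift `X`. -/
def Susp {A : Type*} [TopologicalSpace A] (X : Set (ℤ → A)) : Type _ :=
  Quot (SuspRel X)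

instance {A : Type*} [TopologicalSpace A] (X : Set (ℤ → A)) : TopologicalSpace (Susp X) :=
  instTopologicalSpaceQuot

/-- The suspension flow `φ_t [x,s] = [x, s+t]`. -/
def suspFlow {A : Type*} [TopologicalSpace A] (X : Set (ℤ → A)) (t : ℝ) :
    Susp X → Susp X :=
  Quot.lift (fun p => Quot.mk _ (p.1, p.2 + t)) (by
    rintro p r ⟨n, h1, h2⟩
    exact Quot.sound ⟨n, h1, by rw [h2]; ring⟩)

/-- Two subshifts are flow equivalent if there is a homeomorphism of their suspensions
taking flow lines to flow lines in an orientation-preserving way. -/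
def FlowEquiv {A B : Type*} [TopologicalSpace A] [TopologicalSpace B]
    (X : Set (ℤ → A)) (Y : Set (ℤ → B)) : Prop :=
  ∃ h : Susp X ≃ₜ Susp Y, ∀ u : Susp X, ∃ τ : ℝ → ℝ,
    StrictMono τ ∧ Function.Bijective τ ∧ τ 0 = 0 ∧
      ∀ t : ℝ, h (suspFlow X t u) = suspFlow Y (τ t) (h u)

/-- Cell lengths `z_n` for the type-`S` skew Sturmian sequence `S(0, q/p)`, with `β = p/q`. -/
noncomputable def cellLenS (p q : ℤ) (n : ℤ) : ℕ :=
  if n < 0 then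
    ({k : ℤ | (n : ℚ) < (k : ℚ) * ((p : ℚ) / (q : ℚ)) ∧
        (k : ℚ) * ((p : ℚ) / (q : ℚ)) ≤ (n : ℚ) + 1}).ncard
  else if n = 0 then
    ({k : ℤ | 0 < (k : ℚ) * ((p : ℚ) / (q : ℚ)) ∧
        (k : ℚ) * ((p : ℚ) / (q : ℚ)) < 1}).ncard
  else
    ({k : ℤ | (n : ℚ) ≤ (k : ℚ) * ((p : ℚ) / (q : ℚ)) ∧
        (k : ℚ) * ((p : ℚ) / (q : ℚ)) < (n : ℚ) + 1}).ncard

/-- Cell lengths `z′_n` for the type-`S′` skew Sturmian sequence `S′(0, q/p)`, with `β = p/q`. -/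
noncomputable def cellLenS' (p q : ℤ) (n : ℤ) : ℕ :=
  if n < 0 then
    ({k : ℤ | (n : ℚ) ≤ (k : ℚ) * ((p : ℚ) / (q : ℚ)) ∧
        (k : ℚ) * ((p : ℚ) / (q : ℚ)) < (n : ℚ) + 1}).ncard
  else if n = 0 then
    ({k : ℤ | 0 ≤ (k : ℚ) * ((p : ℚ) / (q : ℚ)) ∧
        (k : ℚ) * ((p : ℚ) / (q : ℚ)) ≤ 1}).ncard
  else
    ({k : ℤ | (n : ℚ) < (k : ℚ) * ((p : ℚ) / (q : ℚ)) ∧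
        (k : ℚ) * ((p : ℚ) / (q : ℚ)) ≤ (n : ℚ) + 1}).ncard

/-- The position `L_n` of the leading `1` of the cell `B_n`. -/
noncomputable def cellStart (z : ℤ → ℕ) (n : ℤ) : ℤ :=
  if 0 ≤ n then n + ∑ j ∈ Finset.Ico (0 : ℤ) n, (z j : ℤ)
  else n - ∑ j ∈ Finset.Ico n (0 : ℤ), (z j : ℤ)

/-- The `{0,1}`-sequence determined by cell lengths `z`: a `1` at each position `L_n`
and `0` elsewhere. -/
noncomputable def seqOfCells (z : ℤ → ℕ) : ℤ → Fin 2 :=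
  fun i => if ∃ n : ℤ, i = cellStart z n then 1 else 0

/-- The type-`S` skew Sturmian sequence `S(0, q/p)`. -/
noncomputable def sturmS (p q : ℤ) : ℤ → Fin 2 := seqOfCells (cellLenS p q)

/-- The type-`S′` skew Sturmian sequence `S′(0, q/p)`. -/
noncomputable def sturmS' (p q : ℤ) : ℤ → Fin 2 := seqOfCells (cellLenS' p q)


lemma per_shift {A : Type*} {y : ℤ → A} {N : ℕ} (h : IsPeriodicWith y N)
    (k : ℤ) (t : ℤ) : y (k + t * N) = y k := by
  induction t using Int.induction_on with
  | zero => simp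
  | succ t ih =>
      have e : k + ((t : ℤ) + 1) * N = (k + t * N) + N := by ring
      rw [e, h.2, ih]
  | pred t ih =>
      have h2 := h.2 (k + (-(t : ℤ) - 1) * N)
      have e : k + (-(t : ℤ) - 1) * N + N = k + (-(t : ℤ)) * N := by ring
      rw [e] at h2
      rw [← h2]
      exact ih

/-- If `(i,m)` and `(j,n)` are anomaly occurrences of an eventually periodic
sequence `x`, then `p(x;i,m) = p(x;j,n)`. -/
theorem stmt_0 {A : Type*} [Fintype A] (x : ℤ → A) (hx : EventuallyPeriodic x)
    (i j : ℤ) (m n : ℕ) (him : IsAnomalyOcc x i m) (hjn : IsAnomalyOcc x j n) :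
    removeBlock x i m = removeBlock x j n := by
  obtain ⟨M, hM⟩ := him.2
  obtain ⟨N, hN⟩ := hjn.2
  funext k
  set t : ℤ := min (min i j - k) 0 with ht
  have ht0 : t ≤ 0 := min_le_right _ _
  have hMN : (1 : ℤ) ≤ (M : ℤ) * (N : ℤ) := by
    have h1 : 0 < M * N := Nat.mul_pos hM.1 hN.1
    exact_mod_cast h1
  have hkt : k + t ≤ min i j := by
    have := min_le_left (min i j - k) 0
    omega
  have hs : k + t * ((M : ℤ) * (N : ℤ)) ≤ min i j := by
    nlinarith
  have hsi : k + t * ((M : ℤ) * (N : ℤ)) ≤ i := le_trans hs (min_le_left _ _)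
  have hsj : k + t * ((M : ℤ) * (N : ℤ)) ≤ j := le_trans hs (min_le_right _ _)
  have e1 : removeBlock x i m k = removeBlock x i m (k + t * ((M : ℤ) * (N : ℤ))) := by
    have := per_shift hM k (t * N)
    have e : k + t * (N : ℤ) * (M : ℤ) = k + t * ((M : ℤ) * (N : ℤ)) := by ring
    rw [e] at this
    exact this.symm
  have e2 : removeBlock x j n k = removeBlock x j n (k + t * ((M : ℤ) * (N : ℤ))) := by
    have := per_shift hN k (t * M)
    have e : k + t * (M : ℤ) * (N : ℤ) = k + t * ((M : ℤ) * (N : ℤ)) := by ring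
    rw [e] at this
    exact this.symm
  rw [e1, e2, removeBlock, removeBlock]
  simp only [if_pos hsi, if_pos hsj]
end

section
/- Let A be a finite alphabet and let x ∈ A^ℤ be an eventually periodic sequence with least period N. If (i,m) and (j,n) are two anomaly occurrences of x, then m ≡ n (mod N). -/
open Classical

section Aux

variable {A : Type*}

lemma period_int {y : ℤ → A} {P : ℕ} (hy : IsPeriodicWith y P) :
    ∀ (t : ℤ) (k : ℤ), y (k + P * t) = y k := by
  intro t
  induction t using Int.induction_on with
  | zero => simp
  | succ t ih =>
    intro k
    have h : k + (P : ℤ) * (t + 1) = (k + P * t) + P := by ring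
    rw [h, hy.2, ih]
  | pred t ih =>
    intro k
    have h : (k + (P : ℤ) * (-t - 1)) + P = k + P * (-t) := by ring
    have := hy.2 (k + (P : ℤ) * (-t - 1))
    rw [h] at this
    exact this.symm.trans (ih k)

lemma eq_of_right_tail {y z : ℤ → A} {P Q : ℕ} (hy : IsPeriodicWith y P)
    (hz : IsPeriodicWith z Q) (K : ℤ) (h : ∀ k ≥ K, y k = z k) : y = z := by
  funext k
  set t : ℤ := max 0 (K - k) with ht
  have ht0 : 0 ≤ t := le_max_left _ _
  have hM : (1 : ℤ) ≤ (P : ℤ) * Q := by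
    have := hy.1; have := hz.1
    have : (1 : ℤ) ≤ (P : ℤ) := by exact_mod_cast hy.1
    have : (1 : ℤ) ≤ (Q : ℤ) := by exact_mod_cast hz.1
    nlinarith [hy.1, hz.1, (by exact_mod_cast hy.1 : (1:ℤ) ≤ (P:ℤ)),
      (by exact_mod_cast hz.1 : (1:ℤ) ≤ (Q:ℤ))]
  have hKle : K ≤ k + (P : ℤ) * Q * t := by
    have h1 : t ≤ (P : ℤ) * Q * t := le_mul_of_one_le_left ht0 hM
    have h2 : K - k ≤ t := le_max_right _ _
    linarith
  have hyk : y (k + (P : ℤ) * Q * t) = y k := by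
    have := period_int hy ((Q : ℤ) * t) k
    rw [show k + (P : ℤ) * ((Q : ℤ) * t) = k + (P : ℤ) * Q * t by ring] at this
    exact this
  have hzk : z (k + (P : ℤ) * Q * t) = z k := by
    have := period_int hz ((P : ℤ) * t) k
    rw [show k + (Q : ℤ) * ((P : ℤ) * t) = k + (P : ℤ) * Q * t by ring] at this
    exact this
  rw [← hyk, h _ hKle, hzk]

lemma eq_of_left_tail {y z : ℤ → A} {P Q : ℕ} (hy : IsPeriodicWith y P)
    (hz : IsPeriodicWith z Q) (K : ℤ) (h : ∀ k ≤ K, y k = z k) : y = z := by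
  funext k
  set t : ℤ := max 0 (k - K) with ht
  have ht0 : 0 ≤ t := le_max_left _ _
  have hM : (1 : ℤ) ≤ (P : ℤ) * Q := by
    nlinarith [(by exact_mod_cast hy.1 : (1:ℤ) ≤ (P:ℤ)),
      (by exact_mod_cast hz.1 : (1:ℤ) ≤ (Q:ℤ))]
  have hKle : k + (P : ℤ) * Q * (-t) ≤ K := by
    have h1 : t ≤ (P : ℤ) * Q * t := le_mul_of_one_le_left ht0 hM
    have h2 : k - K ≤ t := le_max_right _ _
    nlinarith
  have hyk : y (k + (P : ℤ) * Q * (-t)) = y k := by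
    have := period_int hy ((Q : ℤ) * (-t)) k
    rw [show k + (P : ℤ) * ((Q : ℤ) * (-t)) = k + (P : ℤ) * Q * (-t) by ring] at this
    exact this
  have hzk : z (k + (P : ℤ) * Q * (-t)) = z k := by
    have := period_int hz ((P : ℤ) * (-t)) k
    rw [show k + (Q : ℤ) * ((P : ℤ) * (-t)) = k + (P : ℤ) * Q * (-t) by ring] at this
    exact this
  rw [← hyk, h _ hKle, hzk]

end Aux

/-- If `x` is eventually periodic with least period `N` and `(i,m)`, `(j,n)`
are anomaly occurrences of `x`, then `m ≡ n (mod N)`. -/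
theorem stmt_1 {A : Type*} [Fintype A] (x : ℤ → A) (hx : EventuallyPeriodic x)
    (N : ℕ) (hN : evLeastPeriod x = N)
    (i j : ℤ) (m n : ℕ) (him : IsAnomalyOcc x i m) (hjn : IsAnomalyOcc x j n) :
    m ≡ n [MOD N] := by
  classical
  set S : Set ℕ := {N : ℕ | ∃ (i : ℤ) (n : ℕ), IsAnomalyOcc x i n ∧
      IsPeriodicWith (removeBlock x i n) N} with hS
  -- S is nonempty
  obtain ⟨i₀, n₀, hocc₀⟩ := hx.2
  obtain ⟨P₀, hP₀⟩ := hocc₀.2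
  have hSne : S.Nonempty := ⟨P₀, i₀, n₀, hocc₀, hP₀⟩
  have hNmem : N ∈ S := by
    rw [← hN]
    exact Nat.sInf_mem hSne
  obtain ⟨i₁, n₁, h₁occ, h₁per⟩ := hNmem
  set w : ℤ → A := removeBlock x i₁ n₁ with hw
  have hNpos : 0 < N := h₁per.1
  obtain ⟨P, hP⟩ := him.2
  obtain ⟨Q, hQ⟩ := hjn.2
  set y : ℤ → A := removeBlock x i m with hy
  set z : ℤ → A := removeBlock x j n with hz
  -- y = w and z = w since they agree on a left tail
  have hyw : y = w := by
    apply eq_of_left_tail hP h₁per (min i i₁)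
    intro k hk
    simp only [hy, hw, removeBlock]
    rw [if_pos (le_trans hk (min_le_left _ _)), if_pos (le_trans hk (min_le_right _ _))]
  have hzw : z = w := by
    apply eq_of_left_tail hQ h₁per (min j i₁)
    intro k hk
    simp only [hz, hw, removeBlock]
    rw [if_pos (le_trans hk (min_le_left _ _)), if_pos (le_trans hk (min_le_right _ _))]
  have hyN : IsPeriodicWith y N := hyw ▸ h₁per
  -- the shift by d := n - m fixes y
  set d : ℤ := (n : ℤ) - (m : ℤ) with hd
  have hsper : IsPeriodicWith (shiftZ d y) N := by
    refine ⟨hNpos, fun k => ?_⟩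
    simp only [shiftZ]
    rw [show k + (N : ℤ) + d = (k + d) + N by ring, hyN.2]
  have hshift : shiftZ d y = z := by
    apply eq_of_right_tail hsper (hzw ▸ h₁per : IsPeriodicWith z N) (max i j + m + 1)
    intro k hk
    have hkj : j < k := by
      have : j + 1 ≤ max i j + 1 := by
        have := le_max_right i j
        omega
      omega
    have hki : i < k + d := by
      have : i ≤ max i j := le_max_left i j
      omega
    simp only [shiftZ, hy, hz, removeBlock]
    rw [if_neg (by omega), if_neg (by omega)]
    congr 1
    omega
  have hfix : ∀ k : ℤ, y (k + d) = y k := by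
    intro k
    have : z = y := hzw.trans hyw.symm
    rw [← hshift] at this
    have h2 := congrFun this k
    simp only [shiftZ] at h2
    exact h2
  -- the invariance group
  set H : AddSubgroup ℤ :=
    { carrier := {t : ℤ | ∀ k : ℤ, y (k + t) = y k}
      zero_mem' := by intro k; simp
      add_mem' := by
        intro a b ha hb k
        rw [show k + (a + b) = (k + a) + b by ring, hb, ha]
      neg_mem' := by
        intro a ha k
        have := ha (k + -a)
        rw [show k + -a + a = k by ring] at this
        exact this.symm } with hH
  have hdH : d ∈ H := hfix
  have hNH : (N : ℤ) ∈ H := fun k => hyN.2 k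
  have hrH : d % (N : ℤ) ∈ H := by
    have : d % (N : ℤ) = d - (d / N) • (N : ℤ) := by
      rw [Int.emod_def, smul_eq_mul]; ring
    rw [this]
    exact H.sub_mem hdH (H.zsmul_mem hNH _)
  set r : ℤ := d % (N : ℤ) with hr
  have hrnonneg : 0 ≤ r := Int.emod_nonneg d (by exact_mod_cast hNpos.ne')
  have hrlt : r < N := Int.emod_lt_of_pos d (by exact_mod_cast hNpos)
  have hr0 : r = 0 := by
    by_contra h0
    have hrpos : 0 < r := lt_of_le_of_ne hrnonneg (Ne.symm h0)
    have hmemS : r.toNat ∈ S := by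
      refine ⟨i, m, him, ⟨by omega, fun k => ?_⟩⟩
      have := hrH k
      rwa [show ((r.toNat : ℕ) : ℤ) = r from Int.toNat_of_nonneg hrnonneg]
    have : N ≤ r.toNat := hN ▸ Nat.sInf_le hmemS
    omega
  have hdvd : (N : ℤ) ∣ (n : ℤ) - (m : ℤ) := by
    rw [← hd]
    exact Int.dvd_of_emod_eq_zero hr0
  exact (Nat.modEq_iff_dvd).mpr hdvd
end

section
/- Let A and B be finite alphabets, let x ∈ A^ℤ and y ∈ B^ℤ be eventually periodic sequences with least periods N and M respectively, and let X and Y be the subshifts they generate. If X and Y are conjugate, then M = N and a(x) ≡ a(y) (mod N). -/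
open Classical

section Basics
variable {A : Type*}

lemma shiftMap_eq_shiftZ (u : ℤ → A) : shiftMap u = shiftZ 1 u := rfl

lemma shiftZ_zero (u : ℤ → A) : shiftZ 0 u = u := by
  funext i; simp [shiftZ]

lemma shiftZ_shiftZ (a b : ℤ) (u : ℤ → A) : shiftZ a (shiftZ b u) = shiftZ (a + b) u := by
  funext i; simp [shiftZ, add_assoc]

lemma shiftZ_injective (a : ℤ) : Function.Injective (shiftZ a : (ℤ → A) → ℤ → A) := by
  intro u v h
  have : shiftZ (-a) (shiftZ a u) = shiftZ (-a) (shiftZ a v) := by rw [h]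
  rwa [shiftZ_shiftZ, shiftZ_shiftZ, neg_add_cancel, shiftZ_zero, shiftZ_zero] at this

/-- `d : ℤ` is an (integer) period of `u`. -/
def ZPer (u : ℤ → A) (d : ℤ) : Prop := ∀ k : ℤ, u (k + d) = u k

lemma zper_iff_shiftZ {u : ℤ → A} {d : ℤ} : ZPer u d ↔ shiftZ d u = u := by
  constructor
  · intro h; funext i; exact h i
  · intro h k; exact congrFun h k

lemma ZPer.natPer {u : ℤ → A} {N : ℕ} (h : IsPeriodicWith u N) : ZPer u (N : ℤ) := h.2

lemma ZPer.neg {u : ℤ → A} {d : ℤ} (h : ZPer u d) : ZPer u (-d) := by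
  intro k; have := h (k - d); rw [sub_add_cancel] at this; rw [← sub_eq_add_neg]; exact this.symm

lemma ZPer.add {u : ℤ → A} {d e : ℤ} (hd : ZPer u d) (he : ZPer u e) : ZPer u (d + e) := by
  intro k; rw [← add_assoc, he (k + d), hd k]
  
lemma ZPer.zero (u : ℤ → A) : ZPer u 0 := by intro k; simp

lemma ZPer.mul {u : ℤ → A} {d : ℤ} (h : ZPer u d) (t : ℤ) : ZPer u (t * d) := by
  induction t using Int.induction_on with
  | zero => simpa using ZPer.zero u
  | succ n ih => have := ih.add h; rwa [show ((n:ℤ)+1)*d = n*d + d by ring]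
  | pred n ih => have := ih.add h.neg; rwa [show (-(n:ℤ)-1)*d = -(n:ℤ)*d + -d by ring]

/-- the least period -/
noncomputable def leastPer (u : ℤ → A) : ℕ := sInf {N : ℕ | IsPeriodicWith u N}

lemma leastPer_mem {u : ℤ → A} (h : IsPeriodicSeq u) : IsPeriodicWith u (leastPer u) :=
  Nat.sInf_mem h

lemma leastPer_pos {u : ℤ → A} (h : IsPeriodicSeq u) : 0 < leastPer u := (leastPer_mem h).1

lemma leastPer_dvd {u : ℤ → A} (h : IsPeriodicSeq u) {d : ℤ} (hd : ZPer u d) : (leastPer u : ℤ) ∣ d := by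
  set L := leastPer u with hL
  have hLpos : (0:ℤ) < L := by exact_mod_cast leastPer_pos h
  have hr0 : 0 ≤ d % L := Int.emod_nonneg d (by omega)
  have hrlt : d % L < L := Int.emod_lt_of_pos d hLpos
  have hmul : ZPer u ((d / L) * L) := (ZPer.natPer (leastPer_mem h)).mul _
  have hrper : ZPer u (d % L) := by
    have := hd.add hmul.neg
    rwa [show d + -(d / L * L) = d % L by rw [Int.emod_def]; ring] at this
  by_contra hnd
  have hrne : d % L ≠ 0 := by
    intro h0
    exact hnd (Int.dvd_of_emod_eq_zero h0)
  have hrpos : 0 < d % L := lt_of_le_of_ne hr0 (Ne.symm hrne)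
  -- then (d % L).toNat is a smaller period
  have : IsPeriodicWith u (d % L).toNat := by
    refine ⟨by omega, ?_⟩
    intro i
    have := hrper i
    rwa [Int.toNat_of_nonneg hr0]
  have hle : L ≤ (d % L).toNat := Nat.sInf_le this
  omega

/-- Two periodic sequences agreeing on a left ray are equal. -/
lemma eq_of_agree_left {u v : ℤ → A} (hu : IsPeriodicSeq u) (hv : IsPeriodicSeq v)
    (c : ℤ) (h : ∀ k ≤ c, u k = v k) : u = v := by
  obtain ⟨Nu, hNu⟩ := hu
  obtain ⟨Nv, hNv⟩ := hv
  funext k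
  set D : ℤ := (Nu : ℤ) * Nv with hD
  have hD1 : 1 ≤ D := by
    have := hNu.1; have := hNv.1
    have : (1:ℤ) ≤ Nu := by exact_mod_cast hNu.1
    have : (1:ℤ) ≤ Nv := by exact_mod_cast hNv.1
    nlinarith [show (1:ℤ) ≤ (Nu:ℤ) from by exact_mod_cast hNu.1]
  set t : ℤ := max 1 (k - c) with ht
  have ht1 : 1 ≤ t := le_max_left _ _
  have htkc : k - c ≤ t := le_max_right _ _
  have hle : k - t * D ≤ c := by nlinarith
  have hzu : ZPer u (t * D) := by
    have : ZPer u ((t * Nv) * Nu) := (ZPer.natPer hNu).mul _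
    rwa [show (t * Nv) * (Nu:ℤ) = t * D by ring] at this
  have hzv : ZPer v (t * D) := by
    have : ZPer v ((t * Nu) * Nv) := (ZPer.natPer hNv).mul _
    rwa [show (t * Nu) * (Nv:ℤ) = t * D by ring] at this
  calc u k = u (k - t * D + t * D) := by rw [sub_add_cancel]
    _ = u (k - t * D) := hzu _
    _ = v (k - t * D) := h _ hle
    _ = v (k - t * D + t * D) := (hzv _).symm
    _ = v k := by rw [sub_add_cancel]

lemma eq_of_agree_right {u v : ℤ → A} (hu : IsPeriodicSeq u) (hv : IsPeriodicSeq v)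
    (c : ℤ) (h : ∀ k, c ≤ k → u k = v k) : u = v := by
  obtain ⟨Nu, hNu⟩ := hu
  obtain ⟨Nv, hNv⟩ := hv
  funext k
  set D : ℤ := (Nu : ℤ) * Nv with hD
  have hD1 : 1 ≤ D := by
    have : (1:ℤ) ≤ Nu := by exact_mod_cast hNu.1
    nlinarith [show (1:ℤ) ≤ (Nv:ℤ) from by exact_mod_cast hNv.1]
  set t : ℤ := max 1 (c - k) with ht
  have ht1 : 1 ≤ t := le_max_left _ _
  have htkc : c - k ≤ t := le_max_right _ _
  have hle : c ≤ k + t * D := by nlinarith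
  have hzu : ZPer u (t * D) := by
    have : ZPer u ((t * Nv) * Nu) := (ZPer.natPer hNu).mul _
    rwa [show (t * Nv) * (Nu:ℤ) = t * D by ring] at this
  have hzv : ZPer v (t * D) := by
    have : ZPer v ((t * Nu) * Nv) := (ZPer.natPer hNv).mul _
    rwa [show (t * Nu) * (Nv:ℤ) = t * D by ring] at this
  calc u k = u (k + t * D) := (hzu _).symm
    _ = v (k + t * D) := h _ hle
    _ = v k := hzv _

lemma shiftZ_periodic {u : ℤ → A} {d : ℤ} (h : IsPeriodicSeq u) : IsPeriodicSeq (shiftZ d u) := by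
  obtain ⟨N, hN⟩ := h
  refine ⟨N, hN.1, fun i => ?_⟩
  show u (i + N + d) = u (i + d)
  rw [show i + (N:ℤ) + d = (i + d) + N by ring, hN.2]

lemma zper_shiftZ {u : ℤ → A} {d e : ℤ} (h : ZPer u e) : ZPer (shiftZ d u) e := by
  intro k
  simp only [shiftZ]
  have := h (k + d)
  rw [show k + e + d = k + d + e by ring, this]

lemma finset_exists_bound {ι : Type*} (s : Finset ι) (f : ι → ℤ) :
    ∃ m : ℤ, 0 ≤ m ∧ ∀ i ∈ s, f i ≤ m := by
  refine ⟨((s.sup fun i => (f i).toNat : ℕ) : ℤ), by positivity, fun i hi => ?_⟩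
  exact (Int.self_le_toNat _).trans (by exact_mod_cast Finset.le_sup (f := fun i => (f i).toNat) hi)


lemma rb_left {x : ℤ → A} {i : ℤ} {n : ℕ} {k : ℤ} (h : k ≤ i) :
    removeBlock x i n k = x k := if_pos h


lemma rb_right {x : ℤ → A} {i : ℤ} {n : ℕ} {j : ℤ} (h : i + n < j) :
    removeBlock x i n (j - n) = x j := by
  rw [removeBlock, if_neg (by omega), sub_add_cancel]


end Basics

set_option linter.unusedSectionVars false
section Topo
variable {A : Type*} [TopologicalSpace A] [DiscreteTopology A]

lemma self_mem_subshiftGen (x : ℤ → A) : x ∈ subshiftGen x :=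
  subset_closure ⟨0, (shiftZ_zero x).symm⟩

lemma continuous_shiftZ (k : ℤ) : Continuous (shiftZ k : (ℤ → A) → ℤ → A) :=
  continuous_pi fun i => continuous_apply (i + k)

lemma shiftZ_mem_subshiftGen {x u : ℤ → A} (k : ℤ) (hu : u ∈ subshiftGen x) :
    shiftZ k u ∈ subshiftGen x := by
  have h1 : shiftZ k u ∈ shiftZ k '' closure (seqOrbit x) := ⟨u, hu, rfl⟩
  have h2 := image_closure_subset_closure_image (s := seqOrbit x) (continuous_shiftZ (A := A) k)
  refine closure_mono ?_ (h2 h1)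
  rintro w ⟨v, ⟨j, rfl⟩, rfl⟩
  exact ⟨k + j, shiftZ_shiftZ k j x⟩

lemma isOpen_cylinder (z : ℤ → A) (s : Finset ℤ) :
    IsOpen {u : ℤ → A | ∀ l ∈ s, u l = z l} := by
  have : {u : ℤ → A | ∀ l ∈ s, u l = z l} = ⋂ l ∈ s, (fun u : ℤ → A => u l) ⁻¹' {z l} := by
    ext u; simp
  rw [this]
  exact isOpen_biInter_finset fun l _ =>
    (continuous_apply l).isOpen_preimage _ (isOpen_discrete _)

lemma closure_cylinder {s : Set (ℤ → A)} {z : ℤ → A} (hz : z ∈ closure s) (F : Finset ℤ) :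
    ∃ w ∈ s, ∀ l ∈ F, w l = z l := by
  obtain ⟨w, hw1, hw2⟩ := mem_closure_iff.1 hz _ (isOpen_cylinder z F) (fun l _ => rfl)
  exact ⟨w, hw2, hw1⟩

/-- The periodic companion lies in the subshift. -/
lemma companion_mem_subshiftGen {x : ℤ → A} {i : ℤ} {n : ℕ} (hocc : IsAnomalyOcc x i n) :
    removeBlock x i n ∈ subshiftGen x := by
  set p := removeBlock x i n with hp
  obtain ⟨Np, hNp⟩ := hocc.2
  rw [subshiftGen, mem_closure_iff]
  intro U hU hpU
  obtain ⟨I, u, hIu, hsub⟩ := isOpen_pi_iff.1 hU p hpU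
  obtain ⟨m, hm0, hm⟩ := finset_exists_bound I id
  set t : ℤ := max 1 (m - i) with ht
  have hNp1 : (1:ℤ) ≤ Np := by exact_mod_cast hNp.1
  have htN : m - i ≤ t * Np := by nlinarith [le_max_right 1 (m - i), le_max_left 1 (m - i)]
  refine ⟨shiftZ (-(t * Np)) x, ?_, ⟨-(t * Np), rfl⟩⟩
  apply hsub
  intro j hj
  have hjm : j ≤ m := hm j hj
  have hagree : shiftZ (-(t * Np)) x j = p j := by
    show x (j + -(t * Np)) = p j
    have hle : j + -(t * Np) ≤ i := by omega
    rw [← rb_left (x := x) (n := n) hle, ← hp]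
    have := (ZPer.natPer hNp).mul t (j + -(t * Np))
    rw [show j + -(t * Np) + t * Np = j by ring] at this
    exact this.symm
  rw [hagree]
  exact (hIu j hj).2

/-- Every point of the subshift of `x` is a shift of `x` or of its periodic companion. -/
lemma subshift_mem_cases {x : ℤ → A} {i : ℤ} {n : ℕ} (hocc : IsAnomalyOcc x i n)
    {z : ℤ → A} (hz : z ∈ subshiftGen x) :
    (∃ k : ℤ, z = shiftZ k x) ∨ (∃ c : ℤ, z = shiftZ c (removeBlock x i n)) := by
  by_contra hcon
  push_neg at hcon
  obtain ⟨h1, h2⟩ := hcon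
  set p := removeBlock x i n with hp
  obtain ⟨Np, hNp⟩ := hocc.2
  have hNp1 : (1:ℤ) ≤ Np := by exact_mod_cast hNp.1
  have hwit : ∀ w : ℤ → A, z ≠ w → ∃ l, z l ≠ w l := by
    intro w hw
    by_contra hc; push_neg at hc; exact hw (funext hc)
  choose w1 hw1 using fun c : ℤ => hwit _ (h2 c)
  choose w2 hw2 using fun k : ℤ => hwit _ (h1 k)
  obtain ⟨m0, hm00, hm0⟩ := finset_exists_bound (Finset.Ico 0 (Np:ℤ)) (fun c => |w1 c|)
  obtain ⟨m1, hm10, hm1⟩ :=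
    finset_exists_bound (Finset.Icc (i - m0 + 1) (i + n + m0)) (fun k => |w2 k|)
  set m : ℤ := max m0 m1 with hmdef
  obtain ⟨w, ⟨k, rfl⟩, hagree⟩ := closure_cylinder hz (Finset.Icc (-m) m)
  have hAg : ∀ l : ℤ, -m ≤ l → l ≤ m → z l = x (l + k) := by
    intro l hl1 hl2
    have := hagree l (by rw [Finset.mem_Icc]; omega)
    exact this.symm
  rcases le_or_gt k (i - m0) with hk | hk
  · -- left case
    set c : ℤ := k % Np with hc
    have hc0 : 0 ≤ c := Int.emod_nonneg k (by omega)
    have hclt : c < Np := Int.emod_lt_of_pos k (by omega)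
    obtain ⟨hwb1, hwb2⟩ := abs_le.1 (hm0 c (by rw [Finset.mem_Ico]; omega))
    apply hw1 c
    have h1' : z (w1 c) = x (w1 c + k) := hAg _ (by omega) (by omega)
    have h2' : x (w1 c + k) = p (w1 c + k) := (rb_left (by omega)).symm
    have h3' : p (w1 c + k) = p (w1 c + c) := by
      have := (ZPer.natPer hNp).mul (k / Np) (w1 c + c)
      have hkey : w1 c + c + k / (Np:ℤ) * Np = w1 c + k := by
        rw [hc]
        linarith [Int.emod_add_mul_ediv k (Np:ℤ), mul_comm (k / (Np:ℤ)) (Np:ℤ)]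
      rw [hkey] at this
      exact this
    rw [h1', h2', h3']
    rfl
  rcases lt_or_ge (i + n + m0) k with hk2 | hk2
  · -- right case
    set c : ℤ := (k - n) % Np with hc
    have hc0 : 0 ≤ c := Int.emod_nonneg _ (by omega)
    have hclt : c < Np := Int.emod_lt_of_pos _ (by omega)
    obtain ⟨hwb1, hwb2⟩ := abs_le.1 (hm0 c (by rw [Finset.mem_Ico]; omega))
    apply hw1 c
    have h1' : z (w1 c) = x (w1 c + k) := hAg _ (by omega) (by omega)
    have h2' : p (w1 c + k - n) = x (w1 c + k) := rb_right (by omega)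
    have h3' : p (w1 c + k - n) = p (w1 c + c) := by
      have := (ZPer.natPer hNp).mul ((k - (n:ℤ)) / Np) (w1 c + c)
      have hkey : w1 c + c + (k - (n:ℤ)) / (Np:ℤ) * Np = w1 c + k - n := by
        rw [hc]
        linarith [Int.emod_add_mul_ediv (k - (n:ℤ)) (Np:ℤ), mul_comm ((k - (n:ℤ)) / (Np:ℤ)) (Np:ℤ)]
      rw [hkey] at this
      exact this
    rw [h1', ← h2', h3']
    rfl
  · -- middle case
    obtain ⟨hwb1, hwb2⟩ := abs_le.1 (hm1 k (by rw [Finset.mem_Icc]; omega))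
    apply hw2 k
    have h1' : z (w2 k) = x (w2 k + k) := hAg _ (by omega) (by omega)
    rw [h1']; rfl

lemma shift_not_periodic {x : ℤ → A} (hx : ¬ IsPeriodicSeq x) (k : ℤ) :
    ¬ IsPeriodicSeq (shiftZ k x) := by
  intro h
  apply hx
  have := shiftZ_periodic (d := -k) h
  rwa [shiftZ_shiftZ, neg_add_cancel, shiftZ_zero] at this

lemma periodic_mem_cases {x : ℤ → A} (hxnp : ¬ IsPeriodicSeq x) {i : ℤ} {n : ℕ}
    (hocc : IsAnomalyOcc x i n) {z : ℤ → A} (hz : z ∈ subshiftGen x)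
    (hzp : IsPeriodicSeq z) : ∃ c : ℤ, z = shiftZ c (removeBlock x i n) := by
  rcases subshift_mem_cases hocc hz with ⟨k, rfl⟩ | h
  · exact absurd hzp (shift_not_periodic hxnp k)
  · exact h

end Topo

section Companion
variable {A : Type*}

lemma companion_unique {x : ℤ → A} {i i' : ℤ} {n n' : ℕ}
    (h : IsAnomalyOcc x i n) (h' : IsAnomalyOcc x i' n') :
    removeBlock x i n = removeBlock x i' n' := by
  apply eq_of_agree_left h.2 h'.2 (min i i')
  intro k hk
  rw [rb_left (le_trans hk (min_le_left _ _)), rb_left (le_trans hk (min_le_right _ _))]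

lemma evLeastPeriod_eq {x : ℤ → A} {i : ℤ} {n : ℕ}
    (hocc : IsAnomalyOcc x i n) : evLeastPeriod x = leastPer (removeBlock x i n) := by
  unfold evLeastPeriod leastPer
  congr 1
  ext N
  simp only [Set.mem_setOf_eq]
  constructor
  · rintro ⟨i', n', hocc', hper⟩
    rwa [companion_unique hocc hocc']
  · intro hper
    exact ⟨i, n, hocc, hper⟩

end Companion

section Rule
variable {A B : Type*} [TopologicalSpace A] [DiscreteTopology A] [Finite A]
  [TopologicalSpace B] [DiscreteTopology B]

lemma local_rule_coord0 {X : Set (ℤ → A)} (hX : IsClosed X) (Φ : X → B) (hΦ : Continuous Φ) :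
    ∃ r : ℤ, 0 ≤ r ∧ ∀ u v : X,
      (∀ l : ℤ, -r ≤ l → l ≤ r → (u : ℤ → A) l = (v : ℤ → A) l) → Φ u = Φ v := by
  have hcomp : IsCompact (Set.univ : Set X) := by
    have : CompactSpace X := isCompact_iff_compactSpace.mp hX.isCompact
    exact isCompact_univ
  have H : ∀ w : X, ∃ r : ℤ, 0 ≤ r ∧ ∀ v : X,
      (∀ l : ℤ, -r ≤ l → l ≤ r → (v : ℤ → A) l = (w : ℤ → A) l) → Φ v = Φ w := by
    intro w
    have hopen : IsOpen (Φ ⁻¹' {Φ w}) := hΦ.isOpen_preimage _ (isOpen_discrete _)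
    rw [isOpen_induced_iff] at hopen
    obtain ⟨U, hU, hUeq⟩ := hopen
    have hwU : (w : ℤ → A) ∈ U := by
      have hmem : w ∈ Φ ⁻¹' {Φ w} := rfl
      rw [← hUeq] at hmem; exact hmem
    obtain ⟨I, u, hIu, hsub⟩ := isOpen_pi_iff.1 hU _ hwU
    obtain ⟨r, hr0, hr⟩ := finset_exists_bound I (fun j => |j|)
    refine ⟨r, hr0, fun v hv => ?_⟩
    have hvU : (v : ℤ → A) ∈ U := by
      apply hsub
      intro j hj
      obtain ⟨h1, h2⟩ := abs_le.1 (hr j hj)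
      rw [hv j (by omega) (by omega)]
      exact (hIu j hj).2
    have : v ∈ Φ ⁻¹' {Φ w} := by rw [← hUeq]; exact hvU
    exact this
  choose rf hrf0 hrf using H
  set W : X → Set X := fun w =>
    {v : X | ∀ l ∈ Finset.Icc (-(rf w)) (rf w), (v : ℤ → A) l = (w : ℤ → A) l} with hW
  have hWopen : ∀ w, IsOpen (W w) := by
    intro w
    have : W w = ⋂ l ∈ Finset.Icc (-(rf w)) (rf w),
        (fun v : X => (v : ℤ → A) l) ⁻¹' {(w : ℤ → A) l} := by
      ext v; simp [hW]
    rw [this]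
    exact isOpen_biInter_finset fun l _ =>
      (((continuous_apply l).comp continuous_subtype_val)).isOpen_preimage _ (isOpen_discrete _)
  have hcover : (Set.univ : Set X) ⊆ ⋃ w : X, W w := fun v _ =>
    Set.mem_iUnion.2 ⟨v, fun l _ => rfl⟩
  obtain ⟨t, ht⟩ := hcomp.elim_finite_subcover W hWopen hcover
  obtain ⟨r, hr0, hr⟩ := finset_exists_bound t rf
  refine ⟨r, hr0, fun u v huv => ?_⟩
  obtain ⟨w, hwt, hu⟩ : ∃ w ∈ t, u ∈ W w := by
    have := ht (Set.mem_univ u)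
    simpa using this
  have h1 : Φ u = Φ w := hrf w u (fun l ha hb => hu l (Finset.mem_Icc.2 ⟨ha, hb⟩))
  have h2 : Φ v = Φ w := by
    apply hrf w v
    intro l hl1 hl2
    have hrw : rf w ≤ r := hr w hwt
    rw [← huv l (by omega) (by omega)]
    exact hu l (Finset.mem_Icc.2 ⟨hl1, hl2⟩)
  rw [h1, h2]

lemma shiftMap_shiftZ {C : Type*} (k : ℤ) (u : ℤ → C) :
    shiftMap (shiftZ k u) = shiftZ (k + 1) u := by
  funext i
  show u (i + 1 + k) = u (i + (k + 1))
  ring_nf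

lemma shiftMap_injective {C : Type*} : Function.Injective (shiftMap : (ℤ → C) → ℤ → C) := by
  intro u v h
  have : shiftZ 1 u = shiftZ 1 v := h
  exact shiftZ_injective 1 this

variable {x : ℤ → A} {y : ℤ → B}

lemma equivariant (φ : ↥(subshiftGen x) ≃ₜ ↥(subshiftGen y))
    (hφ : ∀ (u : ℤ → A) (hu : u ∈ subshiftGen x) (hu' : shiftMap u ∈ subshiftGen x),
      ((φ ⟨shiftMap u, hu'⟩ : ↥(subshiftGen y)) : ℤ → B)
        = shiftMap ((φ ⟨u, hu⟩ : ↥(subshiftGen y)) : ℤ → B)) :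
    ∀ (k : ℤ) (u : ℤ → A) (hu : u ∈ subshiftGen x) (hu2 : shiftZ k u ∈ subshiftGen x),
      ((φ ⟨shiftZ k u, hu2⟩ : ↥(subshiftGen y)) : ℤ → B)
        = shiftZ k ((φ ⟨u, hu⟩ : ↥(subshiftGen y)) : ℤ → B) := by
  intro k
  induction k using Int.induction_on with
  | zero =>
    intro u hu hu2
    have he : (⟨shiftZ 0 u, hu2⟩ : ↥(subshiftGen x)) = ⟨u, hu⟩ := Subtype.ext (shiftZ_zero u)
    rw [he, shiftZ_zero]
  | succ n ih =>
    intro u hu hu2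
    have hmem : shiftZ (n : ℤ) u ∈ subshiftGen x := shiftZ_mem_subshiftGen _ hu
    have hmem' : shiftMap (shiftZ (n : ℤ) u) ∈ subshiftGen x := by
      rw [shiftMap_shiftZ]; exact shiftZ_mem_subshiftGen _ hu
    have he : (⟨shiftZ ((n : ℤ) + 1) u, hu2⟩ : ↥(subshiftGen x))
        = ⟨shiftMap (shiftZ (n : ℤ) u), hmem'⟩ := Subtype.ext (shiftMap_shiftZ _ _).symm
    rw [he, hφ _ hmem hmem', ih u hu hmem, shiftMap_shiftZ]
  | pred n ih =>
    intro u hu hu2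
    have hmem : shiftZ (-(n : ℤ)) u ∈ subshiftGen x := shiftZ_mem_subshiftGen _ hu
    have hmem' : shiftMap (shiftZ (-(n : ℤ) - 1) u) ∈ subshiftGen x := by
      rw [shiftMap_shiftZ, sub_add_cancel]; exact hmem
    have he : (⟨shiftZ (-(n : ℤ)) u, hmem⟩ : ↥(subshiftGen x))
        = ⟨shiftMap (shiftZ (-(n : ℤ) - 1) u), hmem'⟩ := by
      apply Subtype.ext
      show shiftZ (-(n : ℤ)) u = shiftMap (shiftZ (-(n : ℤ) - 1) u)
      rw [shiftMap_shiftZ, sub_add_cancel]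
    have h1 := ih u hu hmem
    rw [he, hφ _ hu2 hmem'] at h1
    apply shiftMap_injective
    rw [h1, shiftMap_shiftZ, sub_add_cancel]

lemma equivariant_symm (φ : ↥(subshiftGen x) ≃ₜ ↥(subshiftGen y))
    (hφ : ∀ (u : ℤ → A) (hu : u ∈ subshiftGen x) (hu' : shiftMap u ∈ subshiftGen x),
      ((φ ⟨shiftMap u, hu'⟩ : ↥(subshiftGen y)) : ℤ → B)
        = shiftMap ((φ ⟨u, hu⟩ : ↥(subshiftGen y)) : ℤ → B))
    (k : ℤ) (v : ℤ → B) (hv : v ∈ subshiftGen y) (hv2 : shiftZ k v ∈ subshiftGen y) :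
    ((φ.symm ⟨shiftZ k v, hv2⟩ : ↥(subshiftGen x)) : ℤ → A)
      = shiftZ k ((φ.symm ⟨v, hv⟩ : ↥(subshiftGen x)) : ℤ → A) := by
  set u : ↥(subshiftGen x) := φ.symm ⟨v, hv⟩ with hudef
  have happ : φ u = ⟨v, hv⟩ := φ.apply_symm_apply _
  have hmem : shiftZ k (u : ℤ → A) ∈ subshiftGen x := shiftZ_mem_subshiftGen _ u.2
  have h1 := equivariant φ hφ k (u : ℤ → A) u.2 hmem
  have h2 : (⟨(u : ℤ → A), u.2⟩ : ↥(subshiftGen x)) = u := rfl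
  rw [h2, happ] at h1
  have h3 : (⟨shiftZ k v, hv2⟩ : ↥(subshiftGen y)) = φ ⟨shiftZ k (u : ℤ → A), hmem⟩ :=
    Subtype.ext h1.symm
  rw [h3, φ.symm_apply_apply]

/-- The sliding-window rule for a conjugacy. -/
lemma window_rule (φ : ↥(subshiftGen x) ≃ₜ ↥(subshiftGen y))
    (hφ : ∀ (u : ℤ → A) (hu : u ∈ subshiftGen x) (hu' : shiftMap u ∈ subshiftGen x),
      ((φ ⟨shiftMap u, hu'⟩ : ↥(subshiftGen y)) : ℤ → B)
        = shiftMap ((φ ⟨u, hu⟩ : ↥(subshiftGen y)) : ℤ → B)) :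
    ∃ r : ℤ, 0 ≤ r ∧ ∀ (u v : ℤ → A) (hu : u ∈ subshiftGen x) (hv : v ∈ subshiftGen x)
      (j : ℤ), (∀ l : ℤ, j - r ≤ l → l ≤ j + r → u l = v l) →
      ((φ ⟨u, hu⟩ : ↥(subshiftGen y)) : ℤ → B) j = ((φ ⟨v, hv⟩ : ↥(subshiftGen y)) : ℤ → B) j := by
  have hX : IsClosed (subshiftGen x) := isClosed_closure
  set Φ : ↥(subshiftGen x) → B := fun u => ((φ u : ↥(subshiftGen y)) : ℤ → B) 0 with hΦdef
  have hΦ : Continuous Φ :=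
    (continuous_apply 0).comp (continuous_subtype_val.comp φ.continuous_toFun)
  obtain ⟨r, hr0, hr⟩ := local_rule_coord0 hX Φ hΦ
  refine ⟨r, hr0, fun u v hu hv j hagree => ?_⟩
  have hmu : shiftZ j u ∈ subshiftGen x := shiftZ_mem_subshiftGen _ hu
  have hmv : shiftZ j v ∈ subshiftGen x := shiftZ_mem_subshiftGen _ hv
  have h1 := equivariant φ hφ j u hu hmu
  have h2 := equivariant φ hφ j v hv hmv
  have h3 : Φ ⟨shiftZ j u, hmu⟩ = Φ ⟨shiftZ j v, hmv⟩ := by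
    apply hr
    intro l hl1 hl2
    show u (l + j) = v (l + j)
    exact hagree (l + j) (by omega) (by omega)
  have e1 : Φ ⟨shiftZ j u, hmu⟩ = ((φ ⟨u, hu⟩ : ↥(subshiftGen y)) : ℤ → B) j := by
    rw [hΦdef]
    simp only
    rw [h1]
    show ((φ ⟨u, hu⟩ : ↥(subshiftGen y)) : ℤ → B) (0 + j) = _
    rw [zero_add]
  have e2 : Φ ⟨shiftZ j v, hmv⟩ = ((φ ⟨v, hv⟩ : ↥(subshiftGen y)) : ℤ → B) j := by
    rw [hΦdef]
    simp only
    rw [h2]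
    show ((φ ⟨v, hv⟩ : ↥(subshiftGen y)) : ℤ → B) (0 + j) = _
    rw [zero_add]
  rw [← e1, ← e2, h3]

end Rule

/-- If the subshifts generated by eventually periodic sequences `x`, `y`
(with least periods `N`, `M`) are conjugate, then `M = N` and `a(x) ≡ a(y) (mod N)`. -/
theorem stmt_2 {A B : Type*} [Fintype A] [Fintype B]
    [TopologicalSpace A] [DiscreteTopology A] [TopologicalSpace B] [DiscreteTopology B]
    (x : ℤ → A) (y : ℤ → B) (hx : EventuallyPeriodic x) (hy : EventuallyPeriodic y)
    (N M : ℕ) (hN : evLeastPeriod x = N) (hM : evLeastPeriod y = M)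
    (h : Conjugate (subshiftGen x) (subshiftGen y)) :
    M = N ∧ anomalySize x ≡ anomalySize y [MOD N] := by
  obtain ⟨hxnp, hxocc⟩ := hx
  obtain ⟨hynp, hyocc⟩ := hy
  have hxne : {n : ℕ | ∃ i, IsAnomalyOcc x i n}.Nonempty := by
    obtain ⟨i, n, hocc⟩ := hxocc; exact ⟨n, i, hocc⟩
  have hyne : {n : ℕ | ∃ i, IsAnomalyOcc y i n}.Nonempty := by
    obtain ⟨i, n, hocc⟩ := hyocc; exact ⟨n, i, hocc⟩
  obtain ⟨i1, hocc1⟩ : ∃ i, IsAnomalyOcc x i (anomalySize x) := Nat.sInf_mem hxne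
  obtain ⟨i2, hocc2⟩ : ∃ i, IsAnomalyOcc y i (anomalySize y) := Nat.sInf_mem hyne
  set n1 : ℕ := anomalySize x with hn1
  set n2 : ℕ := anomalySize y with hn2
  set p : ℤ → A := removeBlock x i1 n1 with hpdef
  set q : ℤ → B := removeBlock y i2 n2 with hqdef
  have hpper : IsPeriodicSeq p := hocc1.2
  have hqper : IsPeriodicSeq q := hocc2.2
  have hNp : leastPer p = N := ((evLeastPeriod_eq hocc1).symm).trans hN
  have hMq : leastPer q = M := ((evLeastPeriod_eq hocc2).symm).trans hM
  have hNpos : 0 < N := hNp ▸ leastPer_pos hpper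
  have hMpos : 0 < M := hMq ▸ leastPer_pos hqper
  have hPerpN : IsPeriodicWith p N := hNp ▸ leastPer_mem hpper
  have hPerqM : IsPeriodicWith q M := hMq ▸ leastPer_mem hqper
  obtain ⟨φ, hφ⟩ := h
  obtain ⟨r, hr0, hr⟩ := window_rule φ hφ
  have hxmem : x ∈ subshiftGen x := self_mem_subshiftGen x
  have hymem : y ∈ subshiftGen y := self_mem_subshiftGen y
  have hpmem : p ∈ subshiftGen x := companion_mem_subshiftGen hocc1
  have hqmem : q ∈ subshiftGen y := companion_mem_subshiftGen hocc2
  -- `φ p` is `σ^b q`, and satisfies `σ^N (φ p) = φ p`.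
  set W : ℤ → B := ((φ ⟨p, hpmem⟩ : ↥(subshiftGen y)) : ℤ → B) with hWdef
  have hWmem : W ∈ subshiftGen y := (φ ⟨p, hpmem⟩).2
  have hWshift : shiftZ (N : ℤ) W = W := by
    have hsp : shiftZ (N : ℤ) p = p := zper_iff_shiftZ.1 (ZPer.natPer hPerpN)
    have hmm : shiftZ (N : ℤ) p ∈ subshiftGen x := shiftZ_mem_subshiftGen _ hpmem
    have heq := equivariant φ hφ (N : ℤ) p hpmem hmm
    have he : (⟨shiftZ (N : ℤ) p, hmm⟩ : ↥(subshiftGen x)) = ⟨p, hpmem⟩ := Subtype.ext hsp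
    rw [he] at heq
    exact heq.symm
  have hWper : IsPeriodicSeq W := ⟨N, hNpos, fun i => congrFun hWshift i⟩
  obtain ⟨b, hb⟩ : ∃ b : ℤ, W = shiftZ b q := periodic_mem_cases hynp hocc2 hWmem hWper
  -- M divides N
  have hdvdMN : (M : ℤ) ∣ (N : ℤ) := by
    have hzq : ZPer q (N : ℤ) := by
      intro k
      have := congrFun hWshift (k - b)
      rw [hb] at this
      show q (k + N) = q k
      have e1 : shiftZ (N:ℤ) (shiftZ b q) (k - b) = q (k + N) := by
        show q (k - b + (N:ℤ) + b) = q (k + N)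
        congr 1; ring
      have e2 : shiftZ b q (k - b) = q k := by
        show q (k - b + b) = q k
        congr 1; ring
      rw [e1, e2] at this
      exact this
    exact hMq ▸ leastPer_dvd hqper hzq
  -- N divides M, via the inverse conjugacy
  have hdvdNM : (N : ℤ) ∣ (M : ℤ) := by
    set V : ℤ → A := ((φ.symm ⟨q, hqmem⟩ : ↥(subshiftGen x)) : ℤ → A) with hVdef
    have hVmem : V ∈ subshiftGen x := (φ.symm ⟨q, hqmem⟩).2
    have hVshift : shiftZ (M : ℤ) V = V := by
      have hsq : shiftZ (M : ℤ) q = q := zper_iff_shiftZ.1 (ZPer.natPer hPerqM)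
      have hmm : shiftZ (M : ℤ) q ∈ subshiftGen y := shiftZ_mem_subshiftGen _ hqmem
      have heq := equivariant_symm φ hφ (M : ℤ) q hqmem hmm
      have he : (⟨shiftZ (M : ℤ) q, hmm⟩ : ↥(subshiftGen y)) = ⟨q, hqmem⟩ := Subtype.ext hsq
      rw [he] at heq
      exact heq.symm
    have hVper : IsPeriodicSeq V := ⟨M, hMpos, fun i => congrFun hVshift i⟩
    obtain ⟨d, hd⟩ : ∃ d : ℤ, V = shiftZ d p := periodic_mem_cases hxnp hocc1 hVmem hVper
    have hzp : ZPer p (M : ℤ) := by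
      intro k
      have := congrFun hVshift (k - d)
      rw [hd] at this
      show p (k + M) = p k
      have e1 : shiftZ (M:ℤ) (shiftZ d p) (k - d) = p (k + M) := by
        show p (k - d + (M:ℤ) + d) = p (k + M)
        congr 1; ring
      have e2 : shiftZ d p (k - d) = p k := by
        show p (k - d + d) = p k
        congr 1; ring
      rw [e1, e2] at this
      exact this
    exact hNp ▸ leastPer_dvd hpper hzp
  have hMN : M = N :=
    Nat.dvd_antisymm (Int.natCast_dvd_natCast.1 hdvdMN) (Int.natCast_dvd_natCast.1 hdvdNM)
  refine ⟨hMN, ?_⟩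
  -- `φ x = σ^a y`
  set Yx : ℤ → B := ((φ ⟨x, hxmem⟩ : ↥(subshiftGen y)) : ℤ → B) with hYxdef
  have hYxmem : Yx ∈ subshiftGen y := (φ ⟨x, hxmem⟩).2
  have hYxnp : ¬ IsPeriodicSeq Yx := by
    rintro ⟨P, hP⟩
    apply hxnp
    have hsY : shiftZ (P : ℤ) Yx = Yx := zper_iff_shiftZ.1 (ZPer.natPer hP)
    have hmm : shiftZ (P : ℤ) x ∈ subshiftGen x := shiftZ_mem_subshiftGen _ hxmem
    have heq := equivariant φ hφ (P : ℤ) x hxmem hmm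
    rw [← hYxdef, hsY] at heq
    have : (⟨shiftZ (P : ℤ) x, hmm⟩ : ↥(subshiftGen x)) = ⟨x, hxmem⟩ :=
      φ.toEquiv.injective (Subtype.ext heq)
    have hpx : shiftZ (P : ℤ) x = x := congrArg Subtype.val this
    exact ⟨P, hP.1, fun i => congrFun hpx i⟩
  obtain ⟨a, ha⟩ : ∃ a : ℤ, Yx = shiftZ a y := by
    rcases subshift_mem_cases hocc2 hYxmem with hcase | ⟨c, hc⟩
    · exact hcase
    · exact absurd (hc ▸ shiftZ_periodic hqper) hYxnp
  -- left asymptotic: M ∣ b - a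
  have hleft : ZPer q (-a + b) := by
    have hagree : ∀ j : ℤ, j ≤ i1 - r → Yx j = W j := by
      intro j hj
      apply hr x p hxmem hpmem j
      intro l hl1 hl2
      exact (rb_left (by omega)).symm
    have hagree2 : ∀ j : ℤ, j ≤ min (i1 - r) (i2 - a) → shiftZ a q j = shiftZ b q j := by
      intro j hj
      have h1 : Yx j = W j := hagree j (by omega)
      rw [ha, hb] at h1
      have h2 : shiftZ a y j = shiftZ a q j := by
        show y (j + a) = q (j + a)
        exact (rb_left (by omega)).symm
      rw [← h2]
      exact h1
    have heq : shiftZ a q = shiftZ b q :=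
      eq_of_agree_left (shiftZ_periodic hqper) (shiftZ_periodic hqper) _ hagree2
    have : shiftZ (-a) (shiftZ a q) = shiftZ (-a) (shiftZ b q) := by rw [heq]
    rw [shiftZ_shiftZ, shiftZ_shiftZ, neg_add_cancel, shiftZ_zero] at this
    exact zper_iff_shiftZ.2 this.symm
  -- right asymptotic: M ∣ (b - n1) - (a - n2)
  have hright : ZPer q (-(a - n2) + (b - n1)) := by
    have hvmem : shiftZ (-(n1 : ℤ)) p ∈ subshiftGen x := shiftZ_mem_subshiftGen _ hpmem
    have hφv : ((φ ⟨shiftZ (-(n1 : ℤ)) p, hvmem⟩ : ↥(subshiftGen y)) : ℤ → B)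
        = shiftZ ((-(n1 : ℤ)) + b) q := by
      have := equivariant φ hφ (-(n1 : ℤ)) p hpmem hvmem
      rw [this, ← hWdef, hb, shiftZ_shiftZ]
    have hagree : ∀ j : ℤ, i1 + n1 + r < j → Yx j = shiftZ ((-(n1 : ℤ)) + b) q j := by
      intro j hj
      rw [← hφv]
      apply hr x (shiftZ (-(n1:ℤ)) p) hxmem hvmem j
      intro l hl1 hl2
      have : p (l - n1) = x l := rb_right (by omega)
      rw [← this]
      show shiftZ (-(n1:ℤ)) p l = p (l - (n1:ℤ))
      show p (l + -(n1:ℤ)) = p (l - (n1:ℤ))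
      rw [sub_eq_add_neg]
    have hagree2 : ∀ j : ℤ, max (i1 + n1 + r + 1) (i2 + n2 - a + 1) ≤ j →
        shiftZ (a - n2) q j = shiftZ ((-(n1 : ℤ)) + b) q j := by
      intro j hj
      have h1 : Yx j = shiftZ ((-(n1:ℤ)) + b) q j := hagree j (by omega)
      rw [ha] at h1
      have h2 : shiftZ a y j = shiftZ (a - n2) q j := by
        show y (j + a) = q (j + (a - n2))
        have h3 : q (j + a - n2) = y (j + a) := rb_right (by omega)
        rw [← h3]
        congr 1; ring
      rw [← h2]
      exact h1
    have heq : shiftZ (a - n2) q = shiftZ ((-(n1:ℤ)) + b) q :=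
      eq_of_agree_right (shiftZ_periodic hqper) (shiftZ_periodic hqper) _ hagree2
    have : shiftZ (-(a - n2)) (shiftZ (a - n2) q) = shiftZ (-(a - n2)) (shiftZ ((-(n1:ℤ)) + b) q) := by
      rw [heq]
    rw [shiftZ_shiftZ, shiftZ_shiftZ, neg_add_cancel, shiftZ_zero] at this
    have : shiftZ (-(a - (n2:ℤ)) + ((-(n1:ℤ)) + b)) q = q := this.symm
    have hz := zper_iff_shiftZ.2 this
    have harg : -(a - (n2:ℤ)) + ((-(n1:ℤ)) + b) = -(a - (n2:ℤ)) + (b - n1) := by ring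
    rwa [harg] at hz
  -- combine
  have hdvd1 : (M : ℤ) ∣ (-a + b) := hMq ▸ leastPer_dvd hqper hleft
  have hdvd2 : (M : ℤ) ∣ (-(a - n2) + (b - n1)) := hMq ▸ leastPer_dvd hqper hright
  have hdvd3 : (N : ℤ) ∣ ((n2 : ℤ) - (n1 : ℤ)) := by
    have := dvd_sub hdvd2 hdvd1
    have harg : (-(a - (n2:ℤ)) + (b - n1)) - (-a + b) = (n2:ℤ) - n1 := by ring
    rw [harg] at this
    rwa [hMN] at this
  exact Nat.modEq_iff_dvd.2 hdvd3
end

section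
/- Let A and B be finite alphabets, let x ∈ A^ℤ and y ∈ B^ℤ be eventually periodic sequences with least periods N and M respectively, and let X and Y be the subshifts they generate. Then X and Y are conjugate if and only if M = N and a(x) ≡ a(y) (mod N). -/
open Classical

/-! ### Auxiliary machinery for `stmt_4` -/

namespace Stmt4Aux

set_option linter.unusedSectionVars false

open Filter Topology

section Basic

variable {A : Type*} {B : Type*}

theorem shiftZ_apply (k : ℤ) (x : ℤ → A) (j : ℤ) : shiftZ k x j = x (j + k) := rfl

theorem shiftMap_eq_shiftZ_one (x : ℤ → A) : shiftMap x = shiftZ 1 x := rfl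

theorem shiftZ_shiftZ (a b : ℤ) (x : ℤ → A) :
    shiftZ a (shiftZ b x) = shiftZ (a + b) x := by
  funext j; simp [shiftZ, add_assoc]

theorem shiftZ_zero (x : ℤ → A) : shiftZ 0 x = x := by funext j; simp [shiftZ]

theorem shiftZ_injective (k : ℤ) : Function.Injective (shiftZ k (A := A)) := by
  intro u v h
  have := congrArg (shiftZ (-k)) h
  rwa [shiftZ_shiftZ, shiftZ_shiftZ, neg_add_cancel, shiftZ_zero, shiftZ_zero] at this

/-- Iterated periodicity over integer multiples. -/
theorem per_int {p : ℤ → A} {N : ℕ} (hp : ∀ k : ℤ, p (k + N) = p k) (s : ℤ) (k : ℤ) :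
    p (k + s * N) = p k := by
  induction s using Int.induction_on with
  | zero => simp
  | succ m ih =>
      have := hp (k + m * N)
      have e : k + (m + 1 : ℤ) * N = k + m * N + N := by ring
      rw [e, this, ih]
  | pred m ih =>
      have := hp (k + (-m - 1 : ℤ) * N)
      have e : k + (-m - 1 : ℤ) * N + N = k + (-(m : ℤ)) * N := by ring
      rw [e] at this
      rw [← this, ih]

theorem per_dvd {p : ℤ → A} {N : ℕ} (hp : ∀ k : ℤ, p (k + N) = p k) {s : ℤ}
    (hs : (N : ℤ) ∣ s) (k : ℤ) : p (k + s) = p k := by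
  obtain ⟨t, rfl⟩ := hs
  have := per_int hp t k
  rwa [mul_comm] at this

theorem periodic_eq_of_agree_left {p q : ℤ → A} {N M : ℕ} (hN : 0 < N) (hM : 0 < M)
    (hp : ∀ k : ℤ, p (k + N) = p k) (hq : ∀ k : ℤ, q (k + M) = q k)
    {a : ℤ} (h : ∀ k ≤ a, p k = q k) : p = q := by
  funext m
  set s : ℤ := ((m - a).toNat : ℤ) * (N * M) with hs
  have hsN : (N : ℤ) ∣ s := ⟨((m - a).toNat : ℤ) * M, by ring⟩
  have hsM : (M : ℤ) ∣ s := ⟨((m - a).toNat : ℤ) * N, by ring⟩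
  have hone : (1 : ℤ) ≤ (N : ℤ) * M := by
    have : 0 < N * M := Nat.mul_pos hN hM
    exact_mod_cast this
  have h1 : ((m - a).toNat : ℤ) ≤ s := by
    nlinarith [Int.natCast_nonneg (m - a).toNat]
  have h2 : m - s ≤ a := by
    have := Int.self_le_toNat (m - a)
    omega
  have ep : p (m + -s) = p m := per_dvd hp (dvd_neg.mpr hsN) m
  have eq : q (m + -s) = q m := per_dvd hq (dvd_neg.mpr hsM) m
  have hmid : p (m + -s) = q (m + -s) := h _ (by omega)
  rw [← ep, hmid, eq]

theorem periodic_eq_of_agree_right {p q : ℤ → A} {N M : ℕ} (hN : 0 < N) (hM : 0 < M)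
    (hp : ∀ k : ℤ, p (k + N) = p k) (hq : ∀ k : ℤ, q (k + M) = q k)
    {a : ℤ} (h : ∀ k, a ≤ k → p k = q k) : p = q := by
  funext m
  set s : ℤ := ((a - m).toNat : ℤ) * (N * M) with hs
  have hsN : (N : ℤ) ∣ s := ⟨((a - m).toNat : ℤ) * M, by ring⟩
  have hsM : (M : ℤ) ∣ s := ⟨((a - m).toNat : ℤ) * N, by ring⟩
  have hone : (1 : ℤ) ≤ (N : ℤ) * M := by
    have : 0 < N * M := Nat.mul_pos hN hM
    exact_mod_cast this
  have h1 : ((a - m).toNat : ℤ) ≤ s := by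
    nlinarith [Int.natCast_nonneg (a - m).toNat]
  have h2 : a ≤ m + s := by
    have := Int.self_le_toNat (a - m)
    omega
  have ep : p (m + s) = p m := per_dvd hp hsN m
  have eq : q (m + s) = q m := per_dvd hq hsM m
  have hmid : p (m + s) = q (m + s) := h _ h2
  rw [← ep, hmid, eq]

theorem periodic_eq_of_agree_window {p q : ℤ → A} {N : ℕ} (hN : 0 < N)
    (hp : ∀ k : ℤ, p (k + N) = p k) (hq : ∀ k : ℤ, q (k + N) = q k)
    {a : ℤ} (h : ∀ k, a ≤ k → k < a + N → p k = q k) : p = q := by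
  funext m
  have hNz : (N : ℤ) ≠ 0 := by exact_mod_cast hN.ne'
  set r : ℤ := (m - a) % N with hr
  have hr0 : 0 ≤ r := Int.emod_nonneg _ hNz
  have hrN : r < N := Int.emod_lt_of_pos _ (by exact_mod_cast hN)
  have hdm := Int.mul_ediv_add_emod (m - a) (N : ℤ)
  have hdvd : (N : ℤ) ∣ (m - (a + r)) := ⟨(m - a) / N, by omega⟩
  have ep : p ((a + r) + (m - (a + r))) = p (a + r) := per_dvd hp hdvd _
  have eq : q ((a + r) + (m - (a + r))) = q (a + r) := per_dvd hq hdvd _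
  have e : (a + r) + (m - (a + r)) = m := by ring
  rw [e] at ep eq
  rw [ep, eq]
  exact h _ (by linarith) (by linarith)

/-- Packaged data of an eventually periodic sequence. -/
structure EP (x P : ℤ → A) (i : ℤ) (n N : ℕ) : Prop where
  hnp : ¬ IsPeriodicSeq x
  hn : 0 < n
  hN : 0 < N
  left : ∀ k : ℤ, k ≤ i → x k = P k
  right : ∀ k : ℤ, i + n < k → x k = P (k - n)
  per : ∀ k : ℤ, P (k + N) = P k
  least : ∀ s : ℤ, (∀ k, P (k + s) = P k) → (N : ℤ) ∣ s

theorem removeBlock_left {x : ℤ → A} {i : ℤ} {n : ℕ} {k : ℤ} (hk : k ≤ i) :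
    removeBlock x i n k = x k := if_pos hk

theorem removeBlock_right {x : ℤ → A} {i : ℤ} {n : ℕ} {k : ℤ} (hk : ¬ k ≤ i) :
    removeBlock x i n k = x (k + n) := if_neg hk

theorem exists_EP {x : ℤ → A} (hx : EventuallyPeriodic x) :
    ∃ (P : ℤ → A) (i : ℤ), EP x P i (anomalySize x) (evLeastPeriod x) := by
  obtain ⟨hnp, i₀, n₀, hocc₀⟩ := hx
  have hAmem : anomalySize x ∈ {n : ℕ | ∃ i : ℤ, IsAnomalyOcc x i n} :=
    Nat.sInf_mem ⟨n₀, i₀, hocc₀⟩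
  obtain ⟨ia, hocca⟩ := hAmem
  set a := anomalySize x with ha
  set P := removeBlock x ia a with hP
  obtain ⟨hapos, Np, hNp_pos, hNp_per⟩ := hocca
  -- every anomaly occurrence removes to the same periodic sequence
  have sameP : ∀ (i : ℤ) (n : ℕ), IsAnomalyOcc x i n → removeBlock x i n = P := by
    rintro i n ⟨-, Nq, hNq_pos, hNq_per⟩
    refine periodic_eq_of_agree_left hNq_pos hNp_pos hNq_per hNp_per
      (a := min i ia) ?_
    intro k hk
    rw [removeBlock_left (le_trans hk (min_le_left _ _)), hP,
      removeBlock_left (le_trans hk (min_le_right _ _))]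
  have hset : {N : ℕ | ∃ (i : ℤ) (n : ℕ), IsAnomalyOcc x i n ∧
      IsPeriodicWith (removeBlock x i n) N} = {N : ℕ | IsPeriodicWith P N} := by
    ext N
    constructor
    · rintro ⟨i, n, ho, hper⟩
      rwa [sameP i n ho] at hper
    · intro hper
      have hocc' : IsAnomalyOcc x ia a :=
        And.intro hapos (Exists.intro Np (And.intro hNp_pos hNp_per))
      exact ⟨ia, a, hocc', hper⟩
  have hEname : evLeastPeriod x = sInf {N : ℕ | IsPeriodicWith P N} := by
    rw [evLeastPeriod, hset]
  have hmem : IsPeriodicWith P (evLeastPeriod x) := by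
    rw [hEname]
    have hne : Set.Nonempty {N : ℕ | IsPeriodicWith P N} :=
      ⟨Np, And.intro hNp_pos hNp_per⟩
    exact Nat.sInf_mem hne
  obtain ⟨hNpos, hNper⟩ := hmem
  refine ⟨P, ia, ?_⟩
  refine ⟨hnp, hapos, hNpos, ?_, ?_, hNper, ?_⟩
  · intro k hk
    rw [hP, removeBlock_left hk]
  · intro k hk
    have h1 : ¬ (k - (a : ℤ) ≤ ia) := by omega
    have : P (k - (a : ℤ)) = x (k - a + a) := by rw [hP, removeBlock_right h1]
    rw [this]
    congr 1
    ring
  · intro s hs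
    set N := evLeastPeriod x with hNdef
    have hNz : (N : ℤ) ≠ 0 := by exact_mod_cast hNpos.ne'
    set r : ℤ := s % N with hr
    have hr0 : 0 ≤ r := Int.emod_nonneg _ hNz
    have hrN : r < N := Int.emod_lt_of_pos _ (by exact_mod_cast hNpos)
    have hdm := Int.mul_ediv_add_emod s (N : ℤ)
    have hdvd : (N : ℤ) ∣ (s - r) := ⟨s / N, by omega⟩
    have hper_r : ∀ k : ℤ, P (k + r) = P k := by
      intro k
      have h1 : P ((k + r) + (s - r)) = P (k + r) := per_dvd hNper hdvd _
      have e : (k + r) + (s - r) = k + s := by ring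
      rw [e, hs k] at h1
      exact h1.symm
    rcases eq_or_lt_of_le hr0 with h0 | hpos
    · exact Int.dvd_of_emod_eq_zero h0.symm
    · exfalso
      have hperW : IsPeriodicWith P r.toNat := by
        constructor
        · omega
        · intro k
          have : ((r.toNat : ℤ)) = r := Int.toNat_of_nonneg hr0
          rw [this]
          exact hper_r k
      have hle : sInf {N : ℕ | IsPeriodicWith P N} ≤ r.toNat := Nat.sInf_le hperW
      omega

end Basic

section EPFacts

variable {A : Type*} {x P : ℤ → A} {i : ℤ} {n N : ℕ}

theorem EP.not_shift_eq (hx : EP x P i n N) {s : ℤ} (hs : s ≠ 0) :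
    ∃ m : ℤ, x (m + s) ≠ x m := by
  by_contra h
  push_neg at h
  apply hx.hnp
  refine Exists.intro s.natAbs (And.intro (by omega) ?_)
  intro k
  rcases Int.natAbs_eq s with he | he
  · rw [← he]; exact h k
  · have h2 := h (k + s.natAbs)
    have e : k + (s.natAbs : ℤ) + s = k := by omega
    rw [e] at h2
    exact h2.symm

theorem EP.orbit_rep_unique (hx : EP x P i n N) {k j : ℤ}
    (h : shiftZ k x = shiftZ j x) : k = j := by
  by_contra hne
  obtain ⟨m, hm⟩ := hx.not_shift_eq (s := k - j) (by omega)
  apply hm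
  have h2 := congrFun h (m - j)
  have e1 : m + (k - j) = m - j + k := by ring
  have e2 : m - j + j = m := by ring
  rw [e1]
  calc x (m - j + k) = x (m - j + j) := h2
  _ = x m := by rw [e2]

theorem EP.shift_x_ne_shift_P (hx : EP x P i n N) (k r : ℤ) :
    shiftZ k x ≠ shiftZ r P := by
  intro h
  apply hx.hnp
  have h2 : x = shiftZ (r - k) P := by
    have h3 := congrArg (shiftZ (-k)) h
    rw [shiftZ_shiftZ, shiftZ_shiftZ, neg_add_cancel, shiftZ_zero] at h3
    have e : -k + r = r - k := by ring
    rwa [e] at h3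
  refine Exists.intro N (And.intro hx.hN ?_)
  intro m
  rw [h2]
  show P (m + (N : ℤ) + (r - k)) = P (m + (r - k))
  have e : m + (N : ℤ) + (r - k) = (m + (r - k)) + N := by ring
  rw [e]
  exact hx.per _

theorem EP.shift_P_eq_iff (hx : EP x P i n N) {r r' : ℤ} :
    shiftZ r P = shiftZ r' P ↔ (N : ℤ) ∣ (r - r') := by
  constructor
  · intro h
    apply hx.least
    intro k
    have h2 := congrFun h (k - r')
    have e1 : k - r' + r = k + (r - r') := by ring
    have e2 : k - r' + r' = k := by ring
    show P (k + (r - r')) = P k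
    rw [← e1]
    calc P (k - r' + r) = P (k - r' + r') := h2
    _ = P k := by rw [e2]
  · intro hdvd
    funext m
    show P (m + r) = P (m + r')
    have e : m + r = (m + r') + (r - r') := by ring
    rw [e]
    exact per_dvd hx.per hdvd _

end EPFacts

section Pigeonhole

theorem infinite_fiber {T : Finset ℤ} {f : ℕ → ℤ} {s : Set ℕ} (hs : s.Infinite)
    (hf : ∀ R ∈ s, f R ∈ T) : ∃ r ∈ T, {R | R ∈ s ∧ f R = r}.Infinite := by
  by_contra h
  push_neg at h
  have hsub : s ⊆ ⋃ r ∈ T, {R | R ∈ s ∧ f R = r} := by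
    intro R hR
    exact Set.mem_biUnion (hf R hR) ⟨hR, rfl⟩
  have hfin : (⋃ r ∈ T, {R | R ∈ s ∧ f R = r}).Finite :=
    Set.Finite.biUnion T.finite_toSet (fun r hr => h r hr)
  exact hs (hfin.subset hsub)

end Pigeonhole

section Topo

variable {A : Type*} [TopologicalSpace A] [DiscreteTopology A]
variable {x P : ℤ → A} {i : ℤ} {n N : ℕ}

theorem isOpen_cylinder (w : ℤ → A) (F : Finset ℤ) :
    IsOpen {v : ℤ → A | ∀ j ∈ F, v j = w j} := by
  have he : {v : ℤ → A | ∀ j ∈ F, v j = w j} = Set.pi ↑F (fun j => {w j}) := by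
    ext v
    simp [Set.mem_pi]
  rw [he]
  exact isOpen_set_pi F.finite_toSet fun j _ => isOpen_discrete _

theorem tendsto_shift_left (hx : EP x P i n N) (c : ℤ) :
    Tendsto (fun m : ℕ => shiftZ (c - m * N) x) atTop (𝓝 (shiftZ c P)) := by
  rw [tendsto_pi_nhds]
  intro j
  refine Filter.Tendsto.congr' ?_ (tendsto_const_nhds : Tendsto _ _ (𝓝 (shiftZ c P j)))
  filter_upwards [Filter.eventually_ge_atTop (j + c - i).toNat] with m hm
  have hN1 : 1 ≤ N := hx.hN
  have hmm : (m : ℤ) ≤ m * N := by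
    have := Nat.le_mul_of_pos_right m hx.hN
    exact_mod_cast this
  have hle : j + (c - m * N) ≤ i := by
    have := Int.self_le_toNat (j + c - i)
    have hm' : (((j + c - i).toNat : ℕ) : ℤ) ≤ (m : ℤ) := by exact_mod_cast hm
    omega
  show shiftZ c P j = shiftZ (c - m * N) x j
  rw [shiftZ_apply, shiftZ_apply, hx.left _ hle]
  have e : j + (c - m * N) = (j + c) + (-(m : ℤ)) * N := by ring
  rw [e, per_int hx.per]

theorem tendsto_shift_right (hx : EP x P i n N) (c : ℤ) :
    Tendsto (fun m : ℕ => shiftZ (c + m * N) x) atTop (𝓝 (shiftZ (c - n) P)) := by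
  rw [tendsto_pi_nhds]
  intro j
  refine Filter.Tendsto.congr' ?_ (tendsto_const_nhds : Tendsto _ _ (𝓝 (shiftZ (c - (n : ℤ)) P j)))
  filter_upwards [Filter.eventually_ge_atTop (i + n + 1 - (j + c)).toNat] with m hm
  have hmm : (m : ℤ) ≤ m * N := by
    have := Nat.le_mul_of_pos_right m hx.hN
    exact_mod_cast this
  have hgt : i + (n : ℤ) < j + (c + m * N) := by
    have := Int.self_le_toNat (i + n + 1 - (j + c))
    have hm' : (((i + n + 1 - (j + c)).toNat : ℕ) : ℤ) ≤ (m : ℤ) := by exact_mod_cast hm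
    omega
  show shiftZ (c - n) P j = shiftZ (c + m * N) x j
  rw [shiftZ_apply, shiftZ_apply, hx.right _ hgt]
  have e : j + (c + m * N) - n = (j + (c - n)) + (m : ℤ) * N := by ring
  rw [e, per_int hx.per]

/-- Characterization of the subshift generated by an eventually periodic sequence. -/
theorem EP.mem_iff (hx : EP x P i n N) {u : ℤ → A} :
    u ∈ subshiftGen x ↔ (∃ k : ℤ, u = shiftZ k x) ∨ (∃ r : ℤ, u = shiftZ r P) := by
  constructor
  · intro hu
    have hap : ∀ R : ℕ, ∃ k : ℤ, ∀ j : ℤ, |j| ≤ (R : ℤ) → x (j + k) = u j := by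
      intro R
      have hop : IsOpen {v : ℤ → A | ∀ j ∈ Finset.Icc (-(R : ℤ)) R, v j = u j} :=
        isOpen_cylinder u _
      have hmem : u ∈ {v : ℤ → A | ∀ j ∈ Finset.Icc (-(R : ℤ)) R, v j = u j} :=
        fun j _ => rfl
      obtain ⟨v, hvo, hvs⟩ := mem_closure_iff.mp hu _ hop hmem
      obtain ⟨k, rfl⟩ := hvs
      refine ⟨k, fun j hj => ?_⟩
      have := hvo j (Finset.mem_Icc.mpr (abs_le.mp hj))
      exact this
    choose k hk using hap
    by_cases hbd : ∃ k₀ : ℤ, {R : ℕ | k R = k₀}.Infinite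
    · obtain ⟨k₀, hinf⟩ := hbd
      left
      refine ⟨k₀, ?_⟩
      funext j
      obtain ⟨R, hR, hRj⟩ := hinf.exists_gt j.natAbs
      have hR' : k R = k₀ := hR
      have h1 := hk R j (by rw [Int.abs_eq_natAbs]; omega)
      rw [← h1, hR']
      rfl
    · push_neg at hbd
      have hto : ∀ B : ℕ, ∃ R₀ : ℕ, ∀ R ≥ R₀, (B : ℤ) < |k R| := by
        intro B
        have hfin : {R : ℕ | |k R| ≤ (B : ℤ)}.Finite := by
          have hsub : {R : ℕ | |k R| ≤ (B : ℤ)} ⊆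
              ⋃ r ∈ Finset.Icc (-(B : ℤ)) B, {R : ℕ | k R = r} := by
            intro R hR
            simp only [Set.mem_setOf_eq] at hR
            exact Set.mem_biUnion (Finset.mem_Icc.mpr (abs_le.mp hR)) rfl
          refine Set.Finite.subset ?_ hsub
          exact Set.Finite.biUnion (Finset.Icc (-(B : ℤ)) B).finite_toSet
            fun r _ => hbd r
        obtain ⟨R₀, hR₀⟩ := hfin.bddAbove
        refine ⟨R₀ + 1, fun R hR => ?_⟩
        by_contra hcon
        push_neg at hcon
        have := hR₀ hcon
        omega
      set C : ℕ := i.natAbs + n + N + 1 with hC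
      have hdiag : ∀ R : ℕ, ∃ s : ℕ, R ≤ s ∧ ((R + C : ℕ) : ℤ) < |k s| := by
        intro R
        obtain ⟨R₀, h⟩ := hto (R + C)
        exact ⟨max R R₀, le_max_left _ _, h _ (le_max_right _ _)⟩
      choose S hS1 hS2 using hdiag
      right
      have hNZ : (N : ℤ) ≠ 0 := by
        have := hx.hN
        omega
      have hNpos' : (0 : ℤ) < N := by exact_mod_cast hx.hN
      by_cases hneg : {R : ℕ | k (S R) < 0}.Infinite
      · obtain ⟨r₀, hr₀T, hr₀inf⟩ := infinite_fiber (T := Finset.Ico (0 : ℤ) N)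
          (f := fun R => (k (S R)) % N) hneg
          (fun R _ => Finset.mem_Ico.mpr
            ⟨Int.emod_nonneg _ hNZ, Int.emod_lt_of_pos _ hNpos'⟩)
        refine ⟨r₀, ?_⟩
        funext j
        obtain ⟨R, hR, hRj⟩ := hr₀inf.exists_gt j.natAbs
        obtain ⟨hRneg, hRmod⟩ := hR
        have hRneg' : k (S R) < 0 := hRneg
        have hjR : |j| ≤ (S R : ℤ) := by
          have := hS1 R
          rw [Int.abs_eq_natAbs]
          omega
        have h1 := hk (S R) j hjR
        set k' := k (S R) with hk'
        have habs := hS2 R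
        rw [← hk'] at habs
        have hkneg : k' < -((R : ℤ) + (C : ℤ)) := by
          rcases abs_cases k' with ⟨h2, h3⟩ | ⟨h2, h3⟩ <;> omega
        have hle : j + k' ≤ i := by
          have hjabs : j.natAbs < R := hRj
          omega
        have h2 : u j = P (j + k') := by rw [← h1, hx.left _ hle]
        have hdvd : (N : ℤ) ∣ (k' - r₀) := by
          have := Int.mul_ediv_add_emod k' (N : ℤ)
          exact ⟨k' / N, by omega⟩
        have e : j + k' = (j + r₀) + (k' - r₀) := by ring
        calc u j = P (j + k') := h2
        _ = P ((j + r₀) + (k' - r₀)) := by rw [← e]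
        _ = P (j + r₀) := per_dvd hx.per hdvd _
        _ = shiftZ r₀ P j := rfl
      · have hpos : {R : ℕ | 0 ≤ k (S R)}.Infinite := by
          rw [Set.not_infinite] at hneg
          by_contra h
          rw [Set.not_infinite] at h
          have hfin : (Set.univ : Set ℕ).Finite := by
            refine Set.Finite.subset (hneg.union h) ?_
            intro R _
            rcases lt_or_ge (k (S R)) 0 with hh | hh
            · exact Or.inl hh
            · exact Or.inr hh
          exact Set.infinite_univ hfin
        obtain ⟨r₀, hr₀T, hr₀inf⟩ := infinite_fiber (T := Finset.Ico (0 : ℤ) N)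
          (f := fun R => (k (S R) - n) % N) hpos
          (fun R _ => Finset.mem_Ico.mpr
            ⟨Int.emod_nonneg _ hNZ, Int.emod_lt_of_pos _ hNpos'⟩)
        refine ⟨r₀, ?_⟩
        funext j
        obtain ⟨R, hR, hRj⟩ := hr₀inf.exists_gt j.natAbs
        obtain ⟨hRpos, hRmod⟩ := hR
        have hRpos' : 0 ≤ k (S R) := hRpos
        have hjR : |j| ≤ (S R : ℤ) := by
          have := hS1 R
          rw [Int.abs_eq_natAbs]
          omega
        have h1 := hk (S R) j hjR
        set k' := k (S R) with hk'
        have habs := hS2 R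
        rw [← hk'] at habs
        have hkpos : ((R : ℤ) + (C : ℤ)) < k' := by
          rcases abs_cases k' with ⟨h2, h3⟩ | ⟨h2, h3⟩ <;> omega
        have hgt : i + (n : ℤ) < j + k' := by
          have hjabs : j.natAbs < R := hRj
          omega
        have h2 : u j = P (j + k' - n) := by
          rw [← h1, hx.right _ hgt]
        have hdvd : (N : ℤ) ∣ (k' - n - r₀) := by
          have := Int.mul_ediv_add_emod (k' - n) (N : ℤ)
          exact ⟨(k' - n) / N, by omega⟩
        have e : j + k' - n = (j + r₀) + (k' - n - r₀) := by ring
        calc u j = P (j + k' - n) := h2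
        _ = P ((j + r₀) + (k' - n - r₀)) := by rw [← e]
        _ = P (j + r₀) := per_dvd hx.per hdvd _
        _ = shiftZ r₀ P j := rfl
  · rintro (⟨kk, rfl⟩ | ⟨r, rfl⟩)
    · exact subset_closure ⟨kk, rfl⟩
    · have ht := tendsto_shift_left hx r
      refine mem_closure_of_tendsto ht (Filter.Eventually.of_forall fun m => ?_)
      have : shiftZ (r - (m : ℤ) * N) x ∈ seqOrbit x := ⟨r - (m : ℤ) * N, rfl⟩
      exact this

end Topo

section Forward

variable {A B : Type*} [TopologicalSpace A] [DiscreteTopology A]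
  [TopologicalSpace B] [DiscreteTopology B]
variable {x P : ℤ → A} {i : ℤ} {n N : ℕ} {y Q : ℤ → B} {i' : ℤ} {n' M : ℕ}

theorem shiftZ_per {C : Type*} {P : ℤ → C} {N : ℕ} (hper : ∀ k : ℤ, P (k + N) = P k) :
    shiftZ (N : ℤ) P = P := by
  funext m
  exact hper m

theorem EP.shift_mem [TopologicalSpace A] [DiscreteTopology A]
    (hx : EP x P i n N) {u : ℤ → A} (hu : u ∈ subshiftGen x) (t : ℤ) :
    shiftZ t u ∈ subshiftGen x := by
  rw [hx.mem_iff] at hu ⊢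
  rcases hu with ⟨k, rfl⟩ | ⟨r, rfl⟩
  · exact Or.inl ⟨t + k, (shiftZ_shiftZ t k x)⟩
  · exact Or.inr ⟨t + r, (shiftZ_shiftZ t r P)⟩

theorem comm_ext (hx : EP x P i n N) (hy : EP y Q i' n' M)
    (φ : (subshiftGen x) ≃ₜ (subshiftGen y))
    (hφ : ∀ (u : ℤ → A) (hu : u ∈ subshiftGen x) (hu' : shiftMap u ∈ subshiftGen x),
      ((φ ⟨shiftMap u, hu'⟩ : subshiftGen y) : ℤ → B) =
        shiftMap ((φ ⟨u, hu⟩ : subshiftGen y) : ℤ → B))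
    (t : ℤ) (u : ℤ → A) (hu : u ∈ subshiftGen x) :
    ((φ ⟨shiftZ t u, hx.shift_mem hu t⟩ : subshiftGen y) : ℤ → B) =
      shiftZ t ((φ ⟨u, hu⟩ : subshiftGen y) : ℤ → B) := by
  have key : ∀ (w : ℤ → A) (hw : w ∈ subshiftGen x),
      ((φ ⟨shiftZ 1 w, hx.shift_mem hw 1⟩ : subshiftGen y) : ℤ → B) =
        shiftZ 1 ((φ ⟨w, hw⟩ : subshiftGen y) : ℤ → B) := by
    intro w hw
    exact hφ w hw (hx.shift_mem hw 1)
  induction t using Int.induction_on with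
  | zero =>
      have e : (⟨shiftZ 0 u, hx.shift_mem hu 0⟩ : subshiftGen x) = ⟨u, hu⟩ :=
        Subtype.ext (shiftZ_zero u)
      rw [e, shiftZ_zero]
  | succ t ih =>
      have e1 : shiftZ 1 (shiftZ t u) = shiftZ ((t : ℤ) + 1) u := by
        rw [shiftZ_shiftZ]; ring_nf
      have e : (⟨shiftZ ((t : ℤ) + 1) u, hx.shift_mem hu _⟩ : subshiftGen x) =
          ⟨shiftZ 1 (shiftZ t u), hx.shift_mem (hx.shift_mem hu t) 1⟩ :=
        Subtype.ext e1.symm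
      rw [e, key _ (hx.shift_mem hu t), ih, shiftZ_shiftZ]
      ring_nf
  | pred t ih =>
      set w := shiftZ (-(t : ℤ) - 1) u with hw
      have hwmem : w ∈ subshiftGen x := hx.shift_mem hu _
      have e1 : shiftZ 1 w = shiftZ (-(t : ℤ)) u := by
        rw [hw, shiftZ_shiftZ]; ring_nf
      have e : (⟨shiftZ (-(t : ℤ)) u, hx.shift_mem hu _⟩ : subshiftGen x) =
          ⟨shiftZ 1 w, hx.shift_mem hwmem 1⟩ := Subtype.ext e1.symm
      rw [e, key _ hwmem] at ih
      have := congrArg (shiftZ (-1)) ih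
      rw [shiftZ_shiftZ, shiftZ_shiftZ] at this
      have e2 : (-1 : ℤ) + 1 = 0 := by ring
      rw [e2, shiftZ_zero] at this
      rw [this]
      ring_nf

theorem forward_main (hx : EP x P i n N) (hy : EP y Q i' n' M)
    (φ : (subshiftGen x) ≃ₜ (subshiftGen y))
    (hφ : ∀ (u : ℤ → A) (hu : u ∈ subshiftGen x) (hu' : shiftMap u ∈ subshiftGen x),
      ((φ ⟨shiftMap u, hu'⟩ : subshiftGen y) : ℤ → B) =
        shiftMap ((φ ⟨u, hu⟩ : subshiftGen y) : ℤ → B)) :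
    M ∣ N ∧ (M = N → (N : ℤ) ∣ ((n : ℤ) - (n' : ℤ))) := by
  have hPmem : P ∈ subshiftGen x := hx.mem_iff.mpr (Or.inr ⟨0, (shiftZ_zero P).symm⟩)
  have hxmem : x ∈ subshiftGen x := hx.mem_iff.mpr (Or.inl ⟨0, (shiftZ_zero x).symm⟩)
  set φP : ℤ → B := ((φ ⟨P, hPmem⟩ : subshiftGen y) : ℤ → B) with hφPdef
  have hcomm := comm_ext hx hy φ hφ
  -- φ P is fixed by shiftZ N
  have hfix : shiftZ (N : ℤ) φP = φP := by
    have e : (⟨shiftZ (N : ℤ) P, hx.shift_mem hPmem _⟩ : subshiftGen x) = ⟨P, hPmem⟩ :=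
      Subtype.ext (shiftZ_per hx.per)
    have h1 := hcomm (N : ℤ) P hPmem
    rw [e] at h1
    exact h1.symm
  -- φ P is in the periodic part of Y
  have hφPmem : φP ∈ subshiftGen y := (φ ⟨P, hPmem⟩).2
  have hb : ∃ b : ℤ, φP = shiftZ b Q := by
    rcases hy.mem_iff.mp hφPmem with ⟨k, hk⟩ | hb
    · exfalso
      rw [hk, shiftZ_shiftZ] at hfix
      have := hy.orbit_rep_unique hfix
      have := hx.hN
      omega
    · exact hb
  obtain ⟨b, hbQ⟩ := hb
  have hMdvdN : M ∣ N := by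
    rw [hbQ, shiftZ_shiftZ] at hfix
    have := hy.shift_P_eq_iff.mp hfix
    have e : (N : ℤ) + b - b = (N : ℤ) := by ring
    rw [e] at this
    exact_mod_cast this
  refine ⟨hMdvdN, ?_⟩
  intro hMN
  subst hMN
  -- φ x is in the orbit of y
  set φx : ℤ → B := ((φ ⟨x, hxmem⟩ : subshiftGen y) : ℤ → B) with hφxdef
  have hφxmem : φx ∈ subshiftGen y := (φ ⟨x, hxmem⟩).2
  have hc : ∃ c : ℤ, φx = shiftZ c y := by
    rcases hy.mem_iff.mp hφxmem with hc | ⟨r, hr⟩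
    · exact hc
    · exfalso
      -- φ x would be periodic, forcing x periodic
      have hfix2 : shiftZ (M : ℤ) φx = φx := by
        rw [hr, shiftZ_shiftZ, hy.shift_P_eq_iff]
        have e : (M : ℤ) + r - r = (M : ℤ) := by ring
        rw [e]
      have h1 := hcomm (M : ℤ) x hxmem
      rw [hfix2] at h1
      have h2 : (⟨shiftZ (M : ℤ) x, hx.shift_mem hxmem _⟩ : subshiftGen x) = ⟨x, hxmem⟩ := by
        apply φ.injective
        apply Subtype.ext
        exact h1
      have h3 : shiftZ (M : ℤ) x = x := congrArg Subtype.val h2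
      apply hx.hnp
      refine Exists.intro M (And.intro hy.hN ?_)
      intro m
      exact congrFun h3 m
  obtain ⟨c, hcy⟩ := hc
  -- continuity of the map u ↦ (φ u).val
  have hcont : Continuous fun u : subshiftGen x => ((φ u : subshiftGen y) : ℤ → B) :=
    continuous_subtype_val.comp φ.continuous
  -- limit 1 : σ^{-mM} x → P pushes to σ^b Q = σ^c Q
  have hseq1 : Tendsto (fun m : ℕ => (⟨shiftZ (0 - (m : ℤ) * M) x, hx.shift_mem hxmem _⟩ :
      subshiftGen x)) atTop (𝓝 (⟨P, hPmem⟩ : subshiftGen x)) := by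
    rw [tendsto_subtype_rng]
    have h0 := tendsto_shift_left hx 0
    rw [shiftZ_zero] at h0
    exact h0
  have hs1val : ∀ m : ℕ,
      ((φ ⟨shiftZ (0 - (m : ℤ) * M) x, hx.shift_mem hxmem _⟩ : subshiftGen y) : ℤ → B) =
        shiftZ (c - (m : ℤ) * M) y := by
    intro m
    rw [hcomm (0 - (m : ℤ) * M) x hxmem]
    rw [← hφxdef, hcy, shiftZ_shiftZ]
    congr 1
    ring
  have hlim1 : Tendsto (fun m : ℕ =>
      ((φ ⟨shiftZ (0 - (m : ℤ) * M) x, hx.shift_mem hxmem _⟩ : subshiftGen y) : ℤ → B))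
      atTop (𝓝 φP) := by
    exact (hcont.tendsto _).comp hseq1
  have hlim1' : Tendsto (fun m : ℕ => shiftZ (c - (m : ℤ) * M) y) atTop (𝓝 φP) :=
    hlim1.congr hs1val
  have hbc : φP = shiftZ c Q := tendsto_nhds_unique hlim1' (tendsto_shift_left hy c)
  -- limit 2 : σ^{mM} x → σ^{-n} P pushes to the congruence
  have hPmem2 : shiftZ (0 - (n : ℤ)) P ∈ subshiftGen x := hx.shift_mem hPmem _
  have hseq2 : Tendsto (fun m : ℕ => (⟨shiftZ (0 + (m : ℤ) * M) x, hx.shift_mem hxmem _⟩ :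
      subshiftGen x)) atTop (𝓝 (⟨shiftZ (0 - (n : ℤ)) P, hPmem2⟩ : subshiftGen x)) := by
    rw [tendsto_subtype_rng]
    exact tendsto_shift_right hx 0
  have hs2val : ∀ m : ℕ,
      ((φ ⟨shiftZ (0 + (m : ℤ) * M) x, hx.shift_mem hxmem _⟩ : subshiftGen y) : ℤ → B) =
        shiftZ (c + (m : ℤ) * M) y := by
    intro m
    rw [hcomm (0 + (m : ℤ) * M) x hxmem]
    rw [← hφxdef, hcy, shiftZ_shiftZ]
    congr 1
    ring
  have hlim2 : Tendsto (fun m : ℕ => shiftZ (c + (m : ℤ) * M) y) atTop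
      (𝓝 ((φ ⟨shiftZ (0 - (n : ℤ)) P, hPmem2⟩ : subshiftGen y) : ℤ → B)) :=
    (((hcont.tendsto _).comp hseq2)).congr hs2val
  have hval2 : ((φ ⟨shiftZ (0 - (n : ℤ)) P, hPmem2⟩ : subshiftGen y) : ℤ → B) =
      shiftZ (0 - (n : ℤ) + c) Q := by
    have h1 := hcomm (0 - (n : ℤ)) P hPmem
    have e : (⟨shiftZ (0 - (n : ℤ)) P, hPmem2⟩ : subshiftGen x) =
        ⟨shiftZ (0 - (n : ℤ)) P, hx.shift_mem hPmem _⟩ := rfl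
    rw [e, h1, ← hφPdef, hbc, shiftZ_shiftZ]
  have hfin : shiftZ (0 - (n : ℤ) + c) Q = shiftZ (c - (n' : ℤ)) Q := by
    rw [← hval2]
    exact tendsto_nhds_unique hlim2 (tendsto_shift_right hy c)
  have hdvd := hy.shift_P_eq_iff.mp hfin
  have e : (0 - (n : ℤ) + c) - (c - (n' : ℤ)) = (n' : ℤ) - n := by ring
  rw [e] at hdvd
  exact dvd_sub_comm.mp hdvd

end Forward

section Rigidity

variable {A : Type*} {x P : ℤ → A} {i : ℤ} {n N : ℕ}

theorem EP.window_dvd (hx : EP x P i n N) {s a : ℤ}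
    (h : ∀ m : ℤ, a ≤ m → m < a + N → P (m + s) = P m) : (N : ℤ) ∣ s := by
  apply hx.least
  intro k
  have heq : (fun m => P (m + s)) = P := by
    refine periodic_eq_of_agree_window (N := N) hx.hN ?_ hx.per h
    intro m
    show P ((m + N) + s) = P (m + s)
    have e : (m + (N : ℤ)) + s = (m + s) + N := by ring
    rw [e]
    exact hx.per _
  exact congrFun heq k

theorem EP.eq_P_contra (hx : EP x P i n N) (hdn : (N : ℤ) ∣ (n : ℤ))
    (hmid : ∀ m : ℤ, i < m → m ≤ i + n → x m = P m) : False := by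
  apply hx.hnp
  have heq : x = P := by
    funext m
    rcases le_or_gt m i with h | h
    · exact hx.left m h
    rcases le_or_gt m (i + n) with h2 | h2
    · exact hmid m h h2
    · rw [hx.right m h2]
      have e : m - (n : ℤ) = m + (-(n : ℤ)) := by ring
      rw [e]
      exact per_dvd hx.per (dvd_neg.mpr hdn) m
  refine Exists.intro N (And.intro hx.hN ?_)
  intro k
  rw [heq]
  exact hx.per k

theorem EP.no_shift_agree (hx : EP x P i n N) {s : ℤ} (hbig : (n : ℤ) + N ≤ |s|)
    (hag : ∀ m : ℤ, i - N + 1 ≤ m → m ≤ i + n + N → x (m + s) = x m) : False := by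
  rcases abs_cases s with ⟨he, hpos⟩ | ⟨he, hneg⟩
  · have hs : (n : ℤ) + N ≤ s := by omega
    have hNn : (0:ℤ) < N := by exact_mod_cast hx.hN
    have hd1 : (N : ℤ) ∣ (s - n) := by
      apply hx.window_dvd (a := i - N + 1)
      intro m hm1 hm2
      have h1 := hag m (by omega) (by omega)
      have h2 : x m = P m := hx.left m (by omega)
      have h3 : x (m + s) = P (m + s - n) := hx.right _ (by omega)
      have e : m + (s - n) = m + s - n := by ring
      rw [e, ← h3, h1, h2]
    have hd2 : (N : ℤ) ∣ s := by
      apply hx.window_dvd (a := i + 1)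
      intro m hm1 hm2
      have h1 := hag (m + n) (by omega) (by omega)
      have h2 : x (m + n) = P m := by
        rw [hx.right _ (by omega)]
        congr 1
        ring
      have h3 : x (m + n + s) = P (m + s) := by
        rw [hx.right _ (by omega)]
        congr 1
        ring
      rw [← h3, h1, h2]
    have hdn : (N : ℤ) ∣ (n : ℤ) := by
      have hsub := dvd_sub hd2 hd1
      have e : s - (s - n) = (n : ℤ) := by ring
      rwa [e] at hsub
    apply hx.eq_P_contra hdn
    intro m hm1 hm2
    have h1 := hag m (by omega) (by omega)
    have h3 : x (m + s) = P (m + s - n) := hx.right _ (by omega)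
    rw [← h1, h3]
    have e : m + s - n = m + (s - n) := by ring
    rw [e, per_dvd hx.per hd1]
  · have hs : s ≤ -((n : ℤ) + N) := by omega
    have hNn : (0:ℤ) < N := by exact_mod_cast hx.hN
    have hd2 : (N : ℤ) ∣ s := by
      apply hx.window_dvd (a := i - N + 1)
      intro m hm1 hm2
      have h1 := hag m (by omega) (by omega)
      have h2 : x m = P m := hx.left m (by omega)
      have h3 : x (m + s) = P (m + s) := hx.left _ (by omega)
      rw [← h3, h1, h2]
    have hd1 : (N : ℤ) ∣ (s + n) := by
      apply hx.window_dvd (a := i + 1)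
      intro m hm1 hm2
      have h1 := hag (m + n) (by omega) (by omega)
      have h2 : x (m + n) = P m := by
        rw [hx.right _ (by omega)]
        congr 1
        ring
      have h3 : x (m + n + s) = P (m + (s + n)) := by
        rw [hx.left _ (by omega)]
        congr 1
        ring
      rw [← h3, h1, h2]
    have hdn : (N : ℤ) ∣ (n : ℤ) := by
      have hsub := dvd_sub hd1 hd2
      have e : (s + n) - s = (n : ℤ) := by ring
      rwa [e] at hsub
    apply hx.eq_P_contra hdn
    intro m hm1 hm2
    have h1 := hag m (by omega) (by omega)
    have h3 : x (m + s) = P (m + s) := hx.left _ (by omega)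
    rw [← h1, h3, per_dvd hx.per hd2]

theorem EP.no_P_agree (hx : EP x P i n N) {c : ℤ}
    (hag : ∀ m : ℤ, i - N + 1 ≤ m → m ≤ i + n + N → x m = P (m + c)) : False := by
  have hNn : (0:ℤ) < N := by exact_mod_cast hx.hN
  have hdc : (N : ℤ) ∣ c := by
    apply hx.window_dvd (a := i - N + 1)
    intro m hm1 hm2
    rw [← hag m (by omega) (by omega), hx.left m (by omega)]
  have hag' : ∀ m : ℤ, i - N + 1 ≤ m → m ≤ i + n + N → x m = P m := by
    intro m h1 h2
    rw [hag m h1 h2, per_dvd hx.per hdc]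
  have hdn : (N : ℤ) ∣ (n : ℤ) := by
    apply hx.window_dvd (a := i + 1)
    intro m hm1 hm2
    have h1 : x (m + n) = P m := by
      rw [hx.right _ (by omega)]
      congr 1
      ring
    exact ((hag' (m + n) (by omega) (by omega)).symm.trans h1)
  exact hx.eq_P_contra hdn (fun m h1 h2 => hag' m (by omega) (by omega))

end Rigidity

section ConjMap

variable {A B : Type*}

/-- The candidate conjugacy at the level of sequences. -/
noncomputable def conjMap (x P : ℤ → A) (y Q : ℤ → B) : (ℤ → A) → (ℤ → B) := fun u =>
  if h : ∃ k : ℤ, u = shiftZ k x then shiftZ h.choose y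
  else if h2 : ∃ r : ℤ, u = shiftZ r P then shiftZ h2.choose Q
  else y

variable {x P : ℤ → A} {i : ℤ} {n N : ℕ} {y Q : ℤ → B} {i' : ℤ} {n' : ℕ}

theorem conjMap_orbit (hx : EP x P i n N) (y Q : ℤ → B) (k : ℤ) :
    conjMap x P y Q (shiftZ k x) = shiftZ k y := by
  have h : ∃ k' : ℤ, shiftZ k x = shiftZ k' x := ⟨k, rfl⟩
  rw [conjMap, dif_pos h]
  have := hx.orbit_rep_unique h.choose_spec.symm
  rw [this]

theorem conjMap_per (hx : EP x P i n N) (hy : EP y Q i' n' N) (r : ℤ) :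
    conjMap x P y Q (shiftZ r P) = shiftZ r Q := by
  have h : ¬ ∃ k : ℤ, shiftZ r P = shiftZ k x := by
    rintro ⟨k, hk⟩
    exact hx.shift_x_ne_shift_P k r hk.symm
  have h2 : ∃ r' : ℤ, shiftZ r P = shiftZ r' P := ⟨r, rfl⟩
  rw [conjMap, dif_neg h, dif_pos h2]
  rw [hy.shift_P_eq_iff]
  have := hx.shift_P_eq_iff.mp h2.choose_spec.symm
  exact this
  
theorem conjMap_mem [TopologicalSpace A] [DiscreteTopology A]
    [TopologicalSpace B] [DiscreteTopology B]
    (hx : EP x P i n N) (hy : EP y Q i' n' N) {u : ℤ → A} (hu : u ∈ subshiftGen x) :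
    conjMap x P y Q u ∈ subshiftGen y := by
  rcases hx.mem_iff.mp hu with ⟨k, rfl⟩ | ⟨r, rfl⟩
  · rw [conjMap_orbit hx y Q k]
    exact hy.mem_iff.mpr (Or.inl ⟨k, rfl⟩)
  · rw [conjMap_per hx hy r]
    exact hy.mem_iff.mpr (Or.inr ⟨r, rfl⟩)

theorem conjMap_comm (hx : EP x P i n N) (hy : EP y Q i' n' N) {u : ℤ → A}
    (hu : (∃ k : ℤ, u = shiftZ k x) ∨ (∃ r : ℤ, u = shiftZ r P)) :
    conjMap x P y Q (shiftMap u) = shiftMap (conjMap x P y Q u) := by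
  rcases hu with ⟨k, rfl⟩ | ⟨r, rfl⟩
  · rw [shiftMap_eq_shiftZ_one, shiftZ_shiftZ, conjMap_orbit hx y Q,
      conjMap_orbit hx y Q, shiftMap_eq_shiftZ_one, shiftZ_shiftZ]
  · rw [shiftMap_eq_shiftZ_one, shiftZ_shiftZ, conjMap_per hx hy,
      conjMap_per hx hy, shiftMap_eq_shiftZ_one, shiftZ_shiftZ]

theorem conjMap_conjMap (hx : EP x P i n N) (hy : EP y Q i' n' N) {u : ℤ → A}
    (hu : (∃ k : ℤ, u = shiftZ k x) ∨ (∃ r : ℤ, u = shiftZ r P)) :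
    conjMap y Q x P (conjMap x P y Q u) = u := by
  rcases hu with ⟨k, rfl⟩ | ⟨r, rfl⟩
  · rw [conjMap_orbit hx y Q, conjMap_orbit hy x P]
  · rw [conjMap_per hx hy, conjMap_per hy hx]

end ConjMap

section Continuity

variable {A B : Type*} [TopologicalSpace A] [DiscreteTopology A]
  [TopologicalSpace B] [DiscreteTopology B]
variable {x P : ℤ → A} {i : ℤ} {n N : ℕ} {y Q : ℤ → B} {i' : ℤ} {n' : ℕ}

/-- A choice of witnesses to non-periodicity. -/
noncomputable def witF (x : ℤ → A) : ℤ → ℤ := fun s =>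
  if h : ∃ m : ℤ, x (m + s) ≠ x m then h.choose else 0

theorem witF_spec {x : ℤ → A} {s : ℤ} (h : ∃ m : ℤ, x (m + s) ≠ x m) :
    x (witF x s + s) ≠ x (witF x s) := by
  simp only [witF]
  rw [dif_pos h]
  exact h.choose_spec

theorem shiftZ_per' {C : Type*} {P : ℤ → C} {N : ℕ} (hper : ∀ k : ℤ, P (k + N) = P k)
    (ρ : ℤ) (k : ℤ) : shiftZ ρ P (k + N) = shiftZ ρ P k := by
  show P (k + (N : ℤ) + ρ) = P (k + ρ)
  have e : k + (N : ℤ) + ρ = (k + ρ) + N := by ring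
  rw [e]
  exact hper _

theorem conjMap_continuous (hx : EP x P i n N) (hy : EP y Q i' n' N)
    (hcong : (N : ℤ) ∣ ((n : ℤ) - (n' : ℤ))) :
    Continuous (fun u : {v : ℤ → A // v ∈ subshiftGen x} => conjMap x P y Q u.val) := by
  apply continuous_pi
  intro j
  rw [continuous_iff_continuousAt]
  intro u₀
  suffices h : ∃ R : ℕ, ∀ u : {v : ℤ → A // v ∈ subshiftGen x},
      (∀ m : ℤ, |m| ≤ (R : ℤ) → u.val m = u₀.val m) →
        conjMap x P y Q u.val j = conjMap x P y Q u₀.val j by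
    obtain ⟨R, hR⟩ := h
    have hcyl : IsOpen {v : ℤ → A | ∀ m ∈ Finset.Icc (-(R : ℤ)) R, v m = u₀.val m} :=
      isOpen_cylinder u₀.val _
    have hopen : IsOpen {u : {v : ℤ → A // v ∈ subshiftGen x} |
        ∀ m ∈ Finset.Icc (-(R : ℤ)) R, u.val m = u₀.val m} :=
      hcyl.preimage continuous_subtype_val
    have hmem : u₀ ∈ {u : {v : ℤ → A // v ∈ subshiftGen x} |
        ∀ m ∈ Finset.Icc (-(R : ℤ)) R, u.val m = u₀.val m} := fun m _ => rfl
    have hev : ∀ᶠ u in 𝓝 u₀, conjMap x P y Q u.val j = conjMap x P y Q u₀.val j := by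
      refine Filter.eventually_of_mem (hopen.mem_nhds hmem) ?_
      intro u hu
      exact hR u (fun m hm => hu m (Finset.mem_Icc.mpr (abs_le.mp hm)))
    unfold ContinuousAt
    have hp : 𝓝 (conjMap x P y Q u₀.val j) = pure (conjMap x P y Q u₀.val j) := by
      rw [nhds_discrete]
    rw [hp, tendsto_pure]
    exact hev
  have hNn : (0 : ℤ) < N := by exact_mod_cast hx.hN
  rcases hx.mem_iff.mp u₀.2 with ⟨k, hk⟩ | ⟨r, hr⟩
  · -- u₀ is an isolated orbit point
    set B₀ : ℕ := (Finset.Icc (-((n : ℤ) + N)) ((n : ℤ) + N)).sup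
      (fun s => (witF x s).natAbs) with hB₀
    set R : ℕ := B₀ + k.natAbs + i.natAbs + n + N + 1 with hRdef
    refine ⟨R, ?_⟩
    intro u hu
    suffices hval : u.val = u₀.val by rw [hval]
    rcases hx.mem_iff.mp u.2 with ⟨c, hc⟩ | ⟨ρ, hρ⟩
    · have hag : ∀ m : ℤ, |m - k| ≤ (R : ℤ) → x (m + (c - k)) = x m := by
        intro m hm
        have h1 := hu (m - k) (by omega)
        rw [hc, hk, shiftZ_apply, shiftZ_apply] at h1
        have e1 : m - k + c = m + (c - k) := by ring
        have e2 : m - k + k = m := by ring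
        rw [e1, e2] at h1
        exact h1
      by_cases hck : c = k
      · rw [hc, hk, hck]
      · exfalso
        set s : ℤ := c - k with hs
        have hs0 : s ≠ 0 := by omega
        rcases le_or_gt ((n : ℤ) + N) |s| with hbig | hsmall
        · apply hx.no_shift_agree hbig
          intro m hm1 hm2
          apply hag
          rw [abs_le]
          omega
        · have hsmall' : -((n : ℤ) + N) ≤ s ∧ s ≤ (n : ℤ) + N := abs_le.mp hsmall.le
          have hwb : (witF x s).natAbs ≤ B₀ := by
            rw [hB₀]
            apply Finset.le_sup (f := fun s => (witF x s).natAbs)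
            rw [Finset.mem_Icc]
            exact ⟨hsmall'.1, hsmall'.2⟩
          exact witF_spec (hx.not_shift_eq hs0) (hag (witF x s) (by rw [abs_le]; omega))
    · exfalso
      apply hx.no_P_agree (c := ρ - k)
      intro m hm1 hm2
      have h1 := hu (m - k) (by rw [abs_le]; omega)
      rw [hρ, hk, shiftZ_apply, shiftZ_apply] at h1
      have e1 : m - k + ρ = m + (ρ - k) := by ring
      have e2 : m - k + k = m := by ring
      rw [e1, e2] at h1
      exact h1.symm
  · -- u₀ is a periodic point
    set R : ℕ := j.natAbs + i.natAbs + i'.natAbs + n + n' + 2 * N + 2 with hRdef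
    refine ⟨R, ?_⟩
    intro u hu
    have hu₀j : conjMap x P y Q u₀.val j = Q (j + r) := by
      rw [hr, conjMap_per hx hy]
      rfl
    rcases hx.mem_iff.mp u.2 with ⟨c, hc⟩ | ⟨ρ, hρ⟩
    · -- orbit point deep in a periodic window
      have hag : ∀ m : ℤ, |m - c| ≤ (R : ℤ) → x m = P (m + (r - c)) := by
        intro m hm
        have h1 := hu (m - c) (by omega)
        rw [hc, hr, shiftZ_apply, shiftZ_apply] at h1
        have e1 : m - c + c = m := by ring
        have e2 : m - c + r = m + (r - c) := by ring
        rw [e1, e2] at h1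
        exact h1
      rw [hc, conjMap_orbit hx y Q, hu₀j, shiftZ_apply]
      by_cases hleft : c - R + N - 1 ≤ i
      · have hdL : (N : ℤ) ∣ (r - c) := by
          apply hx.window_dvd (a := c - R)
          intro m hm1 hm2
          rw [← hag m (by rw [abs_le]; omega), hx.left m (by omega)]
        by_cases hright : i + (n : ℤ) < c + R - N + 1
        · exfalso
          apply hx.no_P_agree (c := r - c)
          intro m hm1 hm2
          apply hag
          rw [abs_le]
          omega
        · push_neg at hright
          have hjc : j + c ≤ i' := by omega
          rw [hy.left _ hjc]
          have e : j + c = (j + r) + (c - r) := by ring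
          rw [e]
          exact per_dvd hy.per (dvd_sub_comm.mp hdL) _
      · push_neg at hleft
        have hdR : (N : ℤ) ∣ (r - c + n) := by
          apply hx.window_dvd (a := c + R - N + 1 - n)
          intro m hm1 hm2
          have h1 : x (m + n) = P m := by
            rw [hx.right _ (by omega)]
            congr 1
            ring
          have h2 := hag (m + n) (by rw [abs_le]; omega)
          rw [h1] at h2
          have e : m + (r - c + (n : ℤ)) = m + n + (r - c) := by ring
          rw [e, ← h2]
        have hjc : i' + (n' : ℤ) < j + c := by omega
        rw [hy.right _ hjc]
        have hd2 : (N : ℤ) ∣ (c - n' - r) := by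
          have h3 := dvd_add (dvd_neg.mpr hdR) hcong
          have e3 : -(r - c + (n : ℤ)) + ((n : ℤ) - n') = c - (n' : ℤ) - r := by ring
          rwa [e3] at h3
        have e : j + c - n' = (j + r) + (c - (n' : ℤ) - r) := by ring
        rw [e]
        exact per_dvd hy.per hd2 _
    · -- two periodic points agreeing on a long window coincide
      have hagP : ∀ m : ℤ, -(R : ℤ) ≤ m → m < -(R : ℤ) + N → shiftZ ρ P m = shiftZ r P m := by
        intro m hm1 hm2
        have h1 := hu m (by rw [abs_le]; omega)
        rw [hρ, hr] at h1
        exact h1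
      have heq : shiftZ ρ P = shiftZ r P :=
        periodic_eq_of_agree_window hx.hN (shiftZ_per' hx.per ρ) (shiftZ_per' hx.per r) hagP
      rw [hρ, heq, hr]

end Continuity

section Backward

variable {A B : Type*} [Fintype A] [Fintype B] [TopologicalSpace A] [DiscreteTopology A]
  [TopologicalSpace B] [DiscreteTopology B]
variable {x P : ℤ → A} {i : ℤ} {n N : ℕ} {y Q : ℤ → B} {i' : ℤ} {n' : ℕ}

theorem backward (hx : EP x P i n N) (hy : EP y Q i' n' N)
    (hcong : (N : ℤ) ∣ ((n : ℤ) - (n' : ℤ))) :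
    Conjugate (subshiftGen x) (subshiftGen y) := by
  let e : {v : ℤ → A // v ∈ subshiftGen x} ≃ {v : ℤ → B // v ∈ subshiftGen y} :=
    { toFun := fun u => ⟨conjMap x P y Q u.val, conjMap_mem hx hy u.2⟩
      invFun := fun v => ⟨conjMap y Q x P v.val, conjMap_mem hy hx v.2⟩
      left_inv := by
        intro u
        apply Subtype.ext
        exact conjMap_conjMap hx hy (hx.mem_iff.mp u.2)
      right_inv := by
        intro v
        apply Subtype.ext
        exact conjMap_conjMap hy hx (hy.mem_iff.mp v.2) }
  haveI : CompactSpace {v : ℤ → A // v ∈ subshiftGen x} := by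
    rw [← isCompact_iff_compactSpace]
    exact (isClosed_closure (s := seqOrbit x)).isCompact
  have hcont : Continuous e := by
    apply Continuous.subtype_mk
    exact conjMap_continuous hx hy hcong
  refine ⟨hcont.homeoOfEquivCompactToT2, ?_⟩
  intro u hu hu'
  show conjMap x P y Q (shiftMap u) = shiftMap (conjMap x P y Q u)
  exact conjMap_comm hx hy (hx.mem_iff.mp hu)

end Backward

end Stmt4Aux

/-- The subshifts generated by eventually periodic sequences `x`, `y` (with
least periods `N`, `M`) are conjugate iff `M = N` and `a(x) ≡ a(y) (mod N)`. -/
theorem stmt_4 {A B : Type*} [Fintype A] [Fintype B]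
    [TopologicalSpace A] [DiscreteTopology A] [TopologicalSpace B] [DiscreteTopology B]
    (x : ℤ → A) (y : ℤ → B) (hx : EventuallyPeriodic x) (hy : EventuallyPeriodic y)
    (N M : ℕ) (hN : evLeastPeriod x = N) (hM : evLeastPeriod y = M) :
    Conjugate (subshiftGen x) (subshiftGen y) ↔
      (M = N ∧ anomalySize x ≡ anomalySize y [MOD N]) := by
  obtain ⟨Px, ix, hEPx⟩ := Stmt4Aux.exists_EP hx
  obtain ⟨Py, iy, hEPy⟩ := Stmt4Aux.exists_EP hy
  rw [hN] at hEPx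
  rw [hM] at hEPy
  constructor
  · rintro ⟨φ, hφ⟩
    have h1 := Stmt4Aux.forward_main hEPx hEPy φ hφ
    have hφsymm : ∀ (v : ℤ → B) (hv : v ∈ subshiftGen y)
        (hv' : shiftMap v ∈ subshiftGen y),
        ((φ.symm ⟨shiftMap v, hv'⟩ : subshiftGen x) : ℤ → A) =
          shiftMap ((φ.symm ⟨v, hv⟩ : subshiftGen x) : ℤ → A) := by
      intro v hv hv'
      set w := φ.symm ⟨v, hv⟩ with hw
      have hmem : shiftMap (w : ℤ → A) ∈ subshiftGen x := hEPx.shift_mem w.2 1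
      have h2 := hφ (w : ℤ → A) w.2 hmem
      have h3 : φ ⟨(w : ℤ → A), w.2⟩ = ⟨v, hv⟩ := by
        have : (⟨(w : ℤ → A), w.2⟩ : subshiftGen x) = w := rfl
        rw [this, hw]
        exact φ.apply_symm_apply _
      rw [h3] at h2
      have h4 : φ ⟨shiftMap (w : ℤ → A), hmem⟩ = ⟨shiftMap v, hv'⟩ := Subtype.ext h2
      have h5 := congrArg φ.symm h4
      rw [Homeomorph.symm_apply_apply] at h5
      rw [← h5]
    have h2 := Stmt4Aux.forward_main hEPy hEPx φ.symm hφsymm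
    have hMN : M = N := Nat.dvd_antisymm h1.1 h2.1
    refine ⟨hMN, ?_⟩
    have h3 := h1.2 hMN
    rw [Nat.modEq_iff_dvd]
    exact dvd_sub_comm.mp h3
  · rintro ⟨hMN, hmod⟩
    subst hMN
    have hcong : ((M : ℕ) : ℤ) ∣ ((anomalySize x : ℤ) - (anomalySize y : ℤ)) :=
      dvd_sub_comm.mp (Nat.modEq_iff_dvd.mp hmod)
    exact Stmt4Aux.backward hEPx hEPy hcong
end
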